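/- arXiv:2205.14855 — 2 statements merged into one kernel-verified Lean document; each statement's English description precedes it below -/
import Mathlib

section
/- Suppose σ_r² − σ_{r+1}² − ‖(I − U_r U_rᵀ) y_n‖² > 0. Then for any choice of leading-r orthonormal left singular vectors Û_r of Ŷ, ‖Û_r Û_rᵀ − U_r U_rᵀ‖_F ≤ ( 2√2 σ_r ‖(I − U_r U_rᵀ) y_n‖ / (σ_r² − σ_{r+1}² − ‖(I − U_r U_rᵀ)y_n‖²) ) · √( Σ_{i=1}^{r} (u_iᵀ y_n / σ_i)² ). -/
open Matrix MeasureTheory ProbabilityTheory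
open scoped BigOperators ENNReal NNReal

noncomputable section

/-- Euclidean norm of a vector in `Fin p → ℝ`. -/
def vnorm {p : ℕ} (x : Fin p → ℝ) : ℝ := Real.sqrt (∑ i, (x i) ^ 2)

/-- Frobenius norm of a real matrix. -/
def fnorm {m n : ℕ} (A : Matrix (Fin m) (Fin n) ℝ) : ℝ :=
  Real.sqrt (∑ i, ∑ j, (A i j) ^ 2)

/-- Operator (spectral) norm of a real matrix. -/
def opnorm {m n : ℕ} (A : Matrix (Fin m) (Fin n) ℝ) : ℝ :=
  ‖LinearMap.toContinuousLinearMap (Matrix.toEuclideanLin A)‖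

/-- A (full) singular value decomposition of a real `p × n` matrix `A`:
`A = U D Vᵀ` with `U, V` orthogonal and `D` the rectangular diagonal matrix with the
nonincreasing nonnegative singular values `sv 0 ≥ sv 1 ≥ ⋯` on the diagonal
(0-indexed, so the math `σ_i` is `sv (i-1)`), extended by zero beyond `min p n`. -/
structure SVDData (p n : ℕ) (A : Matrix (Fin p) (Fin n) ℝ) where
  U : Matrix (Fin p) (Fin p) ℝ
  V : Matrix (Fin n) (Fin n) ℝ
  sv : ℕ → ℝ
  hU : Uᵀ * U = 1
  hV : Vᵀ * V = 1
  sv_anti : ∀ i j : ℕ, i ≤ j → sv j ≤ sv i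
  sv_nonneg : ∀ i, 0 ≤ sv i
  sv_zero : ∀ j, min p n ≤ j → sv j = 0
  decomp : A = U * (Matrix.of fun (i : Fin p) (j : Fin n) => if (i : ℕ) = (j : ℕ) then sv (i : ℕ) else 0) * Vᵀ

/-- Projection matrix `U_{1:r} U_{1:r}ᵀ` onto the span of the first `r` columns of `U`. -/
def projr {p : ℕ} (U : Matrix (Fin p) (Fin p) ℝ) (r : ℕ) : Matrix (Fin p) (Fin p) ℝ :=
  Matrix.of fun i j => ∑ l : Fin p, if (l : ℕ) < r then U i l * U j l else 0

/-- The `l`-th (0-indexed) column of a matrix, as a vector. -/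
def matCol {p q : ℕ} (U : Matrix (Fin p) (Fin q) ℝ) (l : ℕ) : Fin p → ℝ :=
  fun i => if h : l < q then U i ⟨l, h⟩ else 0

/-- `β` for a cluster assignment: `(k/n) ·` (size of the smallest cluster),
so that `β·n/k` is the size of the smallest cluster. -/
def betaMin (n k : ℕ) (z : Fin n → Fin k) : ℝ :=
  ((k : ℝ) / n) * ⨅ a : Fin k, ((Finset.univ.filter fun i => z i = a).card : ℝ)

/-- Minimum pairwise distance between the centers. -/
def Delta {p k : ℕ} (θ : Fin k → Fin p → ℝ) : ℝ :=
  ⨅ q : {q : Fin k × Fin k // q.1 ≠ q.2}, vnorm (fun i => θ q.1.1 i - θ q.1.2 i)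

/-- Misclustering error `ℓ(z, z*)`. -/
def miscl {n k : ℕ} (z zs : Fin n → Fin k) : ℝ :=
  (⨅ φ : Equiv.Perm (Fin k), ((Finset.univ.filter fun i => z i ≠ φ (zs i)).card : ℝ)) / n

/-- `(z, c)` is a global minimizer of the k-means objective for the columns of `W * X`. -/
def IsKMeans {p n k : ℕ} (W : Matrix (Fin p) (Fin p) ℝ) (X : Matrix (Fin p) (Fin n) ℝ)
    (z : Fin n → Fin k) (c : Fin k → Fin p → ℝ) : Prop :=
  ∀ (z' : Fin n → Fin k) (c' : Fin k → Fin p → ℝ),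
    ∑ i, ∑ a, (W.mulVec (fun b => X b i) a - c (z i) a) ^ 2 ≤
      ∑ i, ∑ a, (W.mulVec (fun b => X b i) a - c' (z' i) a) ^ 2

namespace LOOAux

open Matrix

variable {p : ℕ}

/-- indicator of the first `r` coordinates -/
def chi (p r : ℕ) : Fin p → ℝ := fun l => if (l : ℕ) < r then 1 else 0

lemma chi_nonneg (r : ℕ) (l : Fin p) : 0 ≤ chi p r l := by
  unfold chi; split <;> norm_num

lemma chi_le_one (r : ℕ) (l : Fin p) : chi p r l ≤ 1 := by
  unfold chi; split <;> norm_num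

lemma chi_mul_self (r : ℕ) (l : Fin p) : chi p r l * chi p r l = chi p r l := by
  unfold chi; split <;> norm_num

lemma diag_mulVec (d v : Fin p → ℝ) : (diagonal d).mulVec v = fun i => d i * v i := by
  funext i; simp [mulVec, dotProduct, diagonal]

lemma mulVec_sq_sum {U : Matrix (Fin p) (Fin p) ℝ} (h : Uᵀ * U = 1) (x : Fin p → ℝ) :
    ∑ i, (U.mulVec x i) ^ 2 = ∑ i, (x i) ^ 2 := by
  have h1 : (U.mulVec x) ⬝ᵥ (U.mulVec x) = x ⬝ᵥ x := by
    rw [dotProduct_mulVec, ← mulVec_transpose, mulVec_mulVec, h, one_mulVec,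
      dotProduct_comm]
  simpa [dotProduct, sq] using h1

lemma quadForm (U : Matrix (Fin p) (Fin p) ℝ) (d x z : Fin p → ℝ) :
    x ⬝ᵥ (U * diagonal d * Uᵀ).mulVec z
      = ∑ i, d i * (Uᵀ.mulVec x i) * (Uᵀ.mulVec z i) := by
  rw [← mulVec_mulVec, ← mulVec_mulVec, dotProduct_mulVec, ← mulVec_transpose,
    diag_mulVec]
  simp only [dotProduct]
  exact Finset.sum_congr rfl fun i _ => by ring

lemma conj_mul {U : Matrix (Fin p) (Fin p) ℝ} (h : Uᵀ * U = 1) (a b : Fin p → ℝ) :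
    (U * diagonal a * Uᵀ) * (U * diagonal b * Uᵀ)
      = U * diagonal (fun i => a i * b i) * Uᵀ := by
  have : (U * diagonal a * Uᵀ) * (U * diagonal b * Uᵀ)
      = U * (diagonal a * ((Uᵀ * U) * (diagonal b * Uᵀ))) := by
    simp only [Matrix.mul_assoc]
  rw [this, h, Matrix.one_mul, ← Matrix.mul_assoc (diagonal a), diagonal_mul_diagonal,
    ← Matrix.mul_assoc]

lemma conj_transpose_eq {U : Matrix (Fin p) (Fin p) ℝ} (a : Fin p → ℝ) :
    (U * diagonal a * Uᵀ)ᵀ = U * diagonal a * Uᵀ := by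
  simp [Matrix.transpose_mul, Matrix.diagonal_transpose, Matrix.mul_assoc]

lemma trace_conj (U₁ U₂ : Matrix (Fin p) (Fin p) ℝ) (a b : Fin p → ℝ) :
    Matrix.trace ((U₁ * diagonal a * U₁ᵀ) * (U₂ * diagonal b * U₂ᵀ))
      = ∑ i, ∑ j, a i * b j * ((U₁ᵀ * U₂) i j) ^ 2 := by
  have e1 : (U₁ * diagonal a * U₁ᵀ) * (U₂ * diagonal b * U₂ᵀ)
      = U₁ * (diagonal a * U₁ᵀ * U₂ * diagonal b * U₂ᵀ) := by
    simp only [Matrix.mul_assoc]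
  rw [e1, Matrix.trace_mul_comm]
  have e2 : diagonal a * U₁ᵀ * U₂ * diagonal b * U₂ᵀ * U₁
      = diagonal a * (U₁ᵀ * U₂) * diagonal b * (U₁ᵀ * U₂)ᵀ := by
    simp only [Matrix.transpose_mul, Matrix.transpose_transpose, Matrix.mul_assoc]
  rw [e2]
  set K := U₁ᵀ * U₂ with hK
  have e3 : ∀ i j, (diagonal a * K * diagonal b) i j = a i * K i j * b j := by
    intro i j
    rw [Matrix.mul_diagonal, Matrix.mul_apply]
    rw [Finset.sum_eq_single i]
    · rw [Matrix.diagonal_apply_eq]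
    · intro l _ hl; rw [Matrix.diagonal_apply_ne _ (Ne.symm hl), zero_mul]
    · intro h; exact absurd (Finset.mem_univ i) h
  have e4 : Matrix.trace (diagonal a * K * diagonal b * Kᵀ)
      = ∑ i, ∑ j, (a i * K i j * b j) * K i j := by
    simp only [Matrix.trace, Matrix.diag]
    refine Finset.sum_congr rfl fun i _ => ?_
    rw [Matrix.mul_apply]
    refine Finset.sum_congr rfl fun j _ => ?_
    rw [e3, Matrix.transpose_apply]
  rw [e4]
  exact Finset.sum_congr rfl fun i _ => Finset.sum_congr rfl fun j _ => by ring

lemma K_row_sq {U₁ U₂ : Matrix (Fin p) (Fin p) ℝ}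
    (h₁ : U₁ᵀ * U₁ = 1) (h₂ : U₂ᵀ * U₂ = 1) (i : Fin p) :
    ∑ j, ((U₁ᵀ * U₂) i j) ^ 2 = 1 := by
  have h2' : U₂ * U₂ᵀ = 1 := mul_eq_one_comm.mp h₂
  have hKK : (U₁ᵀ * U₂) * (U₁ᵀ * U₂)ᵀ = 1 := by
    have e : (U₁ᵀ * U₂) * (U₁ᵀ * U₂)ᵀ = U₁ᵀ * ((U₂ * U₂ᵀ) * U₁) := by
      simp only [Matrix.transpose_mul, Matrix.transpose_transpose, Matrix.mul_assoc]
    rw [e, h2', Matrix.one_mul, h₁]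
  have h5 := congrFun (congrFun hKK i) i
  rw [Matrix.mul_apply] at h5
  rw [show (1:ℝ) = (1 : Matrix (Fin p) (Fin p) ℝ) i i by rw [Matrix.one_apply_eq], ← h5]
  refine Finset.sum_congr rfl fun j _ => ?_
  rw [Matrix.transpose_apply, sq]

lemma K_col_sq {U₁ U₂ : Matrix (Fin p) (Fin p) ℝ}
    (h₁ : U₁ᵀ * U₁ = 1) (h₂ : U₂ᵀ * U₂ = 1) (j : Fin p) :
    ∑ i, ((U₁ᵀ * U₂) i j) ^ 2 = 1 := by
  have h1' : U₁ * U₁ᵀ = 1 := mul_eq_one_comm.mp h₁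
  have hKK : (U₁ᵀ * U₂)ᵀ * (U₁ᵀ * U₂) = 1 := by
    have e : (U₁ᵀ * U₂)ᵀ * (U₁ᵀ * U₂) = U₂ᵀ * ((U₁ * U₁ᵀ) * U₂) := by
      simp only [Matrix.transpose_mul, Matrix.transpose_transpose, Matrix.mul_assoc]
    rw [e, h1', Matrix.one_mul, h₂]
  have h5 := congrFun (congrFun hKK j) j
  rw [Matrix.mul_apply] at h5
  rw [show (1:ℝ) = (1 : Matrix (Fin p) (Fin p) ℝ) j j by rw [Matrix.one_apply_eq], ← h5]
  refine Finset.sum_congr rfl fun i _ => ?_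
  rw [Matrix.transpose_apply, sq]

lemma rearr {r : ℕ} (hrp : r < p) (μ c : Fin p → ℝ)
    (hanti : ∀ i j : Fin p, i ≤ j → μ j ≤ μ i) (hnn : ∀ j, 0 ≤ μ j)
    (hc0 : ∀ j, 0 ≤ c j) (hc1 : ∀ j, c j ≤ 1)
    (hsum : ∑ j, c j = ∑ j, chi p r j) :
    ∑ j, μ j * c j ≤ ∑ j, chi p r j * μ j := by
  set t := μ ⟨r, hrp⟩ with ht
  have key : ∀ j : Fin p, μ j * c j - chi p r j * μ j ≤ t * (c j - chi p r j) := by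
    intro j
    by_cases hj : (j : ℕ) < r
    · have hle : μ ⟨r, hrp⟩ ≤ μ j := hanti j ⟨r, hrp⟩ (by simp [Fin.le_def]; omega)
      simp only [chi, if_pos hj]
      nlinarith [hc1 j, hc0 j]
    · have hle : μ j ≤ μ ⟨r, hrp⟩ := hanti ⟨r, hrp⟩ j (by simp [Fin.le_def]; omega)
      simp only [chi, if_neg hj]
      nlinarith [hc0 j]
  have h1 : ∑ j, (μ j * c j - chi p r j * μ j) ≤ ∑ j, t * (c j - chi p r j) :=
    Finset.sum_le_sum fun j _ => key j
  rw [Finset.sum_sub_distrib] at h1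
  have h2 : ∑ j, t * (c j - chi p r j) = 0 := by
    rw [← Finset.mul_sum, Finset.sum_sub_distrib, hsum, sub_self, mul_zero]
  linarith

lemma sum_trunc {k : ℕ} (hkp : k ≤ p) (G : Fin p → ℝ) (hG : ∀ j : Fin p, k ≤ (j : ℕ) → G j = 0) :
    ∑ j : Fin p, G j = ∑ j : Fin k, G (Fin.castLE hkp j) := by
  set f : ℕ → ℝ := fun j => if h : j < p then G ⟨j, h⟩ else 0 with hf
  have e1 : ∑ j : Fin p, G j = ∑ j ∈ Finset.range p, f j := by
    rw [← Fin.sum_univ_eq_sum_range]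
    exact Finset.sum_congr rfl fun j _ => by simp [hf, j.isLt]
  have e2 : ∑ j : Fin k, G (Fin.castLE hkp j) = ∑ j ∈ Finset.range k, f j := by
    rw [← Fin.sum_univ_eq_sum_range]
    refine Finset.sum_congr rfl fun j _ => ?_
    have hjp : (j : ℕ) < p := lt_of_lt_of_le j.isLt hkp
    simp only [hf, dif_pos hjp]
    rfl
  rw [e1, e2]
  symm
  apply Finset.sum_subset (Finset.range_subset_range.mpr hkp)
  intro x hx hnx
  simp only [Finset.mem_range] at hx hnx
  simp only [hf, dif_pos hx]
  exact hG ⟨x, hx⟩ (Nat.le_of_not_lt hnx)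

lemma vnorm_aux_nonneg (x : Fin p → ℝ) : (0:ℝ) ≤ Real.sqrt (∑ i, x i ^ 2) := Real.sqrt_nonneg _

lemma exists_ker {a b : ℕ} (hab : a < b) (B : Matrix (Fin a) (Fin b) ℝ) :
    ∃ c : Fin b → ℝ, c ≠ 0 ∧ B.mulVec c = 0 := by
  have hni : ¬ Function.Injective (Matrix.toLin' B) := by
    intro hinj
    have h := LinearMap.finrank_le_finrank_of_injective hinj
    rw [Module.finrank_fin_fun, Module.finrank_fin_fun] at h
    omega
  rw [Function.not_injective_iff] at hni
  obtain ⟨u, v, huv, hne⟩ := hni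
  refine ⟨u - v, sub_ne_zero.2 hne, ?_⟩
  rw [Matrix.mulVec_sub]
  rw [← Matrix.toLin'_apply, ← Matrix.toLin'_apply, huv, sub_self]

lemma proj_res_sq {R : Matrix (Fin p) (Fin p) ℝ} (h : Rᵀ * R = R) (v : Fin p → ℝ) :
    ∑ k, ((v - R.mulVec v) k) ^ 2 = ∑ k, (v k) ^ 2 - v ⬝ᵥ R.mulVec v := by
  have h1 : ∑ k, (R.mulVec v k) ^ 2 = v ⬝ᵥ R.mulVec v := by
    have e : (R.mulVec v) ⬝ᵥ (R.mulVec v) = v ⬝ᵥ R.mulVec v := by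
      rw [dotProduct_mulVec, ← mulVec_transpose, mulVec_mulVec, h, dotProduct_comm]
    simpa [dotProduct, sq] using e
  have h2 : ∑ k, v k * R.mulVec v k = v ⬝ᵥ R.mulVec v := rfl
  have e3 : ∀ k, ((v - R.mulVec v) k) ^ 2
      = (v k) ^ 2 - 2 * (v k * R.mulVec v k) + (R.mulVec v k) ^ 2 := by
    intro k; simp only [Pi.sub_apply]; ring
  rw [Finset.sum_congr rfl fun k _ => e3 k, Finset.sum_add_distrib, Finset.sum_sub_distrib,
    ← Finset.mul_sum, h1, h2]
  ring

lemma trace_mul_vecMulVec (R : Matrix (Fin p) (Fin p) ℝ) (v w : Fin p → ℝ) :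
    Matrix.trace (R * vecMulVec v w) = w ⬝ᵥ R.mulVec v := by
  simp only [Matrix.trace, Matrix.diag, Matrix.mul_apply, vecMulVec_apply, dotProduct,
    Matrix.mulVec, Finset.mul_sum]
  exact Finset.sum_congr rfl fun i _ => Finset.sum_congr rfl fun k _ => by ring

lemma dot_vecMulVec_self (x v : Fin p → ℝ) :
    x ⬝ᵥ (vecMulVec v v).mulVec x = (v ⬝ᵥ x) ^ 2 := by
  have e1 : ∀ a, (vecMulVec v v).mulVec x a = v a * (v ⬝ᵥ x) := by
    intro a
    simp only [Matrix.mulVec, vecMulVec_apply, dotProduct, Finset.mul_sum]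
    exact Finset.sum_congr rfl fun k _ => by ring
  have e2 : x ⬝ᵥ (vecMulVec v v).mulVec x = ∑ a, x a * (v a * (v ⬝ᵥ x)) :=
    Finset.sum_congr rfl fun a _ => by rw [e1]
  rw [e2, sq]
  rw [show (v ⬝ᵥ x) * (v ⬝ᵥ x) = ∑ a, (v a * x a) * (v ⬝ᵥ x) from by
    rw [← Finset.sum_mul]; rfl]
  exact Finset.sum_congr rfl fun a _ => by ring

lemma sum_sq_eq_trace {A : Matrix (Fin p) (Fin p) ℝ} (h : Aᵀ = A) :
    ∑ a, ∑ b, (A a b) ^ 2 = Matrix.trace (A * A) := by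
  simp only [Matrix.trace, Matrix.diag, Matrix.mul_apply]
  refine Finset.sum_congr rfl fun a _ => Finset.sum_congr rfl fun b _ => ?_
  have e : A b a = A a b := by
    rw [← congrFun (congrFun h b) a, Matrix.transpose_apply]
  rw [e, sq]

lemma kyfan {r : ℕ} (hrp : r < p) {U₁ U₂ : Matrix (Fin p) (Fin p) ℝ}
    (h₁ : U₁ᵀ * U₁ = 1) (h₂ : U₂ᵀ * U₂ = 1) (μ : Fin p → ℝ)
    (hanti : ∀ i j : Fin p, i ≤ j → μ j ≤ μ i) (hnn : ∀ j, 0 ≤ μ j) :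
    Matrix.trace ((U₁ * diagonal (chi p r) * U₁ᵀ) * (U₂ * diagonal μ * U₂ᵀ))
      ≤ ∑ j, chi p r j * μ j := by
  rw [trace_conj]
  set K := U₁ᵀ * U₂ with hK
  set c : Fin p → ℝ := fun j => ∑ i, chi p r i * (K i j) ^ 2 with hc
  have e1 : ∑ i, ∑ j, chi p r i * μ j * (K i j) ^ 2 = ∑ j, μ j * c j := by
    rw [Finset.sum_comm]
    refine Finset.sum_congr rfl fun j _ => ?_
    rw [hc, Finset.mul_sum]
    exact Finset.sum_congr rfl fun i _ => by ring
  rw [e1]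
  have hc0 : ∀ j, 0 ≤ c j := fun j =>
    Finset.sum_nonneg fun i _ => mul_nonneg (chi_nonneg _ _) (sq_nonneg _)
  have hc1 : ∀ j, c j ≤ 1 := by
    intro j
    have h1 : c j ≤ ∑ i, (K i j) ^ 2 := by
      refine Finset.sum_le_sum fun i _ => ?_
      have ha := chi_le_one (p := p) r i
      have hb := chi_nonneg (p := p) r i
      nlinarith [sq_nonneg (K i j)]
    rw [K_col_sq h₁ h₂ j] at h1
    exact h1
  have hcs : ∑ j, c j = ∑ j, chi p r j := by
    simp only [hc]
    rw [Finset.sum_comm]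
    refine Finset.sum_congr rfl fun i _ => ?_
    rw [← Finset.mul_sum, K_row_sq h₁ h₂ i, mul_one]
  exact rearr hrp μ c hanti hnn hc0 hc1 hcs

/-- local Euclidean norm -/
def vn {p : ℕ} (x : Fin p → ℝ) : ℝ := Real.sqrt (∑ i, (x i) ^ 2)

lemma vn_nonneg (x : Fin p → ℝ) : 0 ≤ vn x := Real.sqrt_nonneg _

lemma vn_sq (x : Fin p → ℝ) : vn x ^ 2 = ∑ i, (x i) ^ 2 :=
  Real.sq_sqrt (Finset.sum_nonneg fun i _ => sq_nonneg _)

lemma vn_mono {x z : Fin p → ℝ} (h : ∑ i, (x i) ^ 2 ≤ ∑ i, (z i) ^ 2) : vn x ≤ vn z :=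
  Real.sqrt_le_sqrt h

lemma dot_le_vn (x z : Fin p → ℝ) : ∑ i, x i * z i ≤ vn x * vn z := by
  have h := Finset.sum_mul_sq_le_sq_mul_sq Finset.univ x z
  have h2 : vn x * vn z = Real.sqrt ((∑ i, (x i) ^ 2) * (∑ i, (z i) ^ 2)) :=
    (Real.sqrt_mul (Finset.sum_nonneg fun i _ => sq_nonneg _) _).symm
  rw [h2]
  refine le_trans (le_abs_self _) ?_
  rw [← Real.sqrt_sq_eq_abs]
  exact Real.sqrt_le_sqrt h

lemma vn_smul (t : ℝ) (x : Fin p → ℝ) : vn (t • x) = |t| * vn x := by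
  unfold vn
  rw [← Real.sqrt_sq_eq_abs, ← Real.sqrt_mul (sq_nonneg t)]
  congr 1
  rw [Finset.mul_sum]
  exact Finset.sum_congr rfl fun i _ => by simp [Pi.smul_apply, smul_eq_mul]; ring

lemma vn_sub_le (x z : Fin p → ℝ) : vn (x - z) ≤ vn x + vn z := by
  have hd : -(∑ i, x i * z i) ≤ vn x * vn z := by
    have h := dot_le_vn x (-z)
    have e : ∑ i, x i * (-z) i = -(∑ i, x i * z i) := by
      rw [← Finset.sum_neg_distrib]
      exact Finset.sum_congr rfl fun i _ => by simp [mul_neg]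
    have e2 : vn (-z) = vn z := by
      unfold vn; congr 1; exact Finset.sum_congr rfl fun i _ => by simp
    rw [e, e2] at h; exact h
  have hsq : ∑ i, ((x - z) i) ^ 2 ≤ (vn x + vn z) ^ 2 := by
    have e : ∑ i, ((x - z) i) ^ 2
        = ∑ i, (x i) ^ 2 - 2 * (∑ i, x i * z i) + ∑ i, (z i) ^ 2 := by
      rw [Finset.mul_sum, ← Finset.sum_sub_distrib, ← Finset.sum_add_distrib]
      exact Finset.sum_congr rfl fun i _ => by simp [Pi.sub_apply]; ring
    rw [e, ← vn_sq x, ← vn_sq z]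
    nlinarith [hd]
  calc vn (x - z) ≤ Real.sqrt ((vn x + vn z) ^ 2) := Real.sqrt_le_sqrt hsq
    _ = vn x + vn z := Real.sqrt_sq (add_nonneg (vn_nonneg x) (vn_nonneg z))

end LOOAux

namespace LOOAux

open Matrix

lemma projr_eq {p : ℕ} (U : Matrix (Fin p) (Fin p) ℝ) (r : ℕ) :
    projr U r = U * diagonal (chi p r) * Uᵀ := by
  ext i j
  rw [Matrix.mul_apply]
  simp only [projr, Matrix.of_apply]
  refine Finset.sum_congr rfl fun l _ => ?_
  rw [Matrix.mul_diagonal, Matrix.transpose_apply]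
  unfold chi
  split <;> ring

lemma svd_gram {p n : ℕ} {A : Matrix (Fin p) (Fin n) ℝ} (D : SVDData p n A) :
    A * Aᵀ = D.U * diagonal (fun i : Fin p => D.sv (i : ℕ) ^ 2) * D.Uᵀ := by
  set S : Matrix (Fin p) (Fin n) ℝ :=
    Matrix.of fun (i : Fin p) (j : Fin n) =>
      if (i : ℕ) = (j : ℕ) then D.sv (i : ℕ) else 0 with hS
  have hSS : S * Sᵀ = diagonal (fun i : Fin p => D.sv (i : ℕ) ^ 2) := by
    ext i k
    rw [Matrix.mul_apply]
    by_cases hik : i = k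
    · subst hik
      rw [Matrix.diagonal_apply_eq]
      by_cases hin : (i : ℕ) < n
      · rw [Finset.sum_eq_single (⟨(i : ℕ), hin⟩ : Fin n)]
        · simp [hS, sq]
        · intro j _ hj
          have hne : ¬ ((i : ℕ) = (j : ℕ)) := fun hc => hj (Fin.ext hc.symm)
          simp [hS, hne]
        · exact fun h => absurd (Finset.mem_univ _) h
      · have hz : D.sv (i : ℕ) = 0 :=
          D.sv_zero _ (le_trans (min_le_right p n) (Nat.le_of_not_lt hin))
        rw [hz]
        rw [Finset.sum_eq_zero]
        · norm_num
        · intro j _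
          have hne : ¬ ((i : ℕ) = (j : ℕ)) := by have := j.isLt; omega
          simp [hS, hne]
    · rw [Matrix.diagonal_apply_ne _ hik]
      rw [Finset.sum_eq_zero]
      intro j _
      by_cases h1 : (i : ℕ) = (j : ℕ)
      · have h2 : ¬ ((k : ℕ) = (j : ℕ)) := fun hc => hik (Fin.ext (by omega))
        simp [hS, h1, h2]
      · simp [hS, h1]
  have hA : A = D.U * S * D.Vᵀ := D.decomp
  calc A * Aᵀ = (D.U * S * D.Vᵀ) * (D.U * S * D.Vᵀ)ᵀ := by rw [← hA]
    _ = D.U * (S * ((D.Vᵀ * D.V) * (Sᵀ * D.Uᵀ))) := by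
        simp only [Matrix.transpose_mul, Matrix.transpose_transpose, Matrix.mul_assoc]
    _ = D.U * (S * (Sᵀ * D.Uᵀ)) := by rw [D.hV, Matrix.one_mul]
    _ = D.U * diagonal (fun i : Fin p => D.sv (i : ℕ) ^ 2) * D.Uᵀ := by
        rw [← Matrix.mul_assoc S, hSS, ← Matrix.mul_assoc]

lemma scalar_ineq {a s gp : ℝ} (ha : 0 < a) (has : a ≤ s) (hgp : 0 < gp)
    (hga : gp ≤ a ^ 2) : s * gp ≤ 2 * a * (s ^ 2 - a ^ 2 + gp) := by
  rcases le_total s (2 * a) with h | h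
  · nlinarith [mul_nonneg hgp.le (sub_nonneg.mpr h),
      mul_nonneg (mul_nonneg ha.le (sub_nonneg.mpr has)) (by linarith : (0:ℝ) ≤ s + a)]
  · nlinarith [mul_le_mul_of_nonneg_right hga (sub_nonneg.mpr h), mul_pos ha (lt_of_lt_of_le ha has)]

lemma trace_conj_same {p : ℕ} {U : Matrix (Fin p) (Fin p) ℝ} (h : Uᵀ * U = 1)
    (a b : Fin p → ℝ) :
    Matrix.trace ((U * Matrix.diagonal a * Uᵀ) * (U * Matrix.diagonal b * Uᵀ))
      = ∑ j, a j * b j := by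
  rw [trace_conj, h]
  have e : ∀ i : Fin p, ∑ j, a i * b j * ((1 : Matrix (Fin p) (Fin p) ℝ) i j) ^ 2
      = a i * b i := by
    intro i
    rw [Finset.sum_eq_single i]
    · rw [Matrix.one_apply_eq]; ring
    · intro j _ hj; rw [Matrix.one_apply_ne (Ne.symm hj)]; ring
    · exact fun hh => absurd (Finset.mem_univ _) hh
  rw [Finset.sum_congr rfl fun i _ => e i]

lemma scalar_ineq2 {a s gp : ℝ} (ha : 0 < a) (has : a ≤ s) (hgp : 0 < gp)
    (hga : gp ≤ a ^ 2) : s * gp ≤ 2 * a * (s ^ 2 - a ^ 2 + gp) := by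
  rcases le_total s (2 * a) with h | h
  · nlinarith [mul_nonneg hgp.le (sub_nonneg.mpr h),
      mul_nonneg (mul_nonneg ha.le (sub_nonneg.mpr has)) (by linarith : (0:ℝ) ≤ s + a)]
  · nlinarith [mul_le_mul_of_nonneg_right hga (sub_nonneg.mpr h),
      mul_pos ha (lt_of_lt_of_le ha has)]

lemma col_scalar {σs γ gap si sr μr vnf ti vnq : ℝ}
    (hσs : 0 < σs) (hsia : σs ≤ si) (hgap0 : 0 < gap)
    (hgapdef : gap = σs ^ 2 - sr ^ 2 - γ ^ 2)
    (htri : si ^ 2 * vnf ≤ μr * vnf + |ti| * vnq)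
    (hstep : μr ≤ sr ^ 2 + γ ^ 2) (hqγ : vnq ≤ γ)
    (hvnf : 0 ≤ vnf) (hγ : 0 ≤ γ) (hvnq : 0 ≤ vnq) :
    vnf ^ 2 ≤ (2 * σs * γ / gap) ^ 2 * (ti / si) ^ 2 := by
  have hsi_pos : 0 < si := lt_of_lt_of_le hσs hsia
  have hgap_le : gap ≤ σs ^ 2 := by nlinarith [sq_nonneg sr, sq_nonneg γ]
  have hss : σs ^ 2 ≤ si ^ 2 := by nlinarith
  have hden_pos : 0 < si ^ 2 - sr ^ 2 - γ ^ 2 := by nlinarith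
  have hA : (si ^ 2 - sr ^ 2 - γ ^ 2) * vnf ≤ |ti| * γ := by
    nlinarith [mul_le_mul_of_nonneg_right hstep hvnf,
      mul_le_mul_of_nonneg_left hqγ (abs_nonneg ti)]
  have hf_le : vnf ≤ |ti| * γ / (si ^ 2 - sr ^ 2 - γ ^ 2) := by
    rw [le_div_iff₀ hden_pos]
    nlinarith [hA]
  have hscal : si * gap ≤ 2 * σs * (si ^ 2 - sr ^ 2 - γ ^ 2) := by
    have h := scalar_ineq2 hσs hsia hgap0 hgap_le
    nlinarith [h]
  have hbound : vnf ≤ 2 * σs * γ / gap * (|ti| / si) := by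
    refine le_trans hf_le ?_
    rw [div_mul_div_comm, div_le_div_iff₀ hden_pos (mul_pos hgap0 hsi_pos)]
    nlinarith [mul_le_mul_of_nonneg_left hscal (mul_nonneg (abs_nonneg ti) hγ)]
  have hsqb : (2 * σs * γ / gap * (|ti| / si)) ^ 2
      = (2 * σs * γ / gap) ^ 2 * (ti / si) ^ 2 := by
    rw [mul_pow, div_pow, div_pow, sq_abs, div_pow]
  rw [← hsqb]
  exact pow_le_pow_left₀ hvnf hbound 2

end LOOAux

set_option maxHeartbeats 1000000 in
/-- **Theorem 6 (leave-one-out singular subspace perturbation, weak gap condition).**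
If `σ_r² − σ_{r+1}² − ‖(I − U_r U_rᵀ) y‖² > 0`, then for any choice of leading-`r`
orthonormal left singular vectors `Û_r` of `Ŷ`,
`‖Û_r Û_rᵀ − U_r U_rᵀ‖_F ≤ (2√2 σ_r ‖(I − U_r U_rᵀ) y‖ /
  (σ_r² − σ_{r+1}² − ‖(I − U_r U_rᵀ) y‖²)) √(Σ_{i=1}^r (u_iᵀ y/σ_i)²)`. -/
theorem leave_one_out_perturbation_weak_gap
    (p n : ℕ) (Yhat : Matrix (Fin p) (Fin (n + 1)) ℝ)
    (Y : Matrix (Fin p) (Fin n) ℝ) (y : Fin p → ℝ)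
    (hY : ∀ i j, Y i j = Yhat i (Fin.castSucc j))
    (hy : ∀ i, y i = Yhat i (Fin.last n))
    (r : ℕ) (hr0 : 0 < r) (hr : r ≤ min p n)
    (D : SVDData p n Y) (Dh : SVDData p (n + 1) Yhat)
    (hgap : 0 <
      D.sv (r - 1) ^ 2 - D.sv r ^ 2 - vnorm (y - (projr D.U r).mulVec y) ^ 2) :
    fnorm (projr Dh.U r - projr D.U r) ≤
      2 * Real.sqrt 2 * D.sv (r - 1) * vnorm (y - (projr D.U r).mulVec y) /
        (D.sv (r - 1) ^ 2 - D.sv r ^ 2 - vnorm (y - (projr D.U r).mulVec y) ^ 2) *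
        Real.sqrt (∑ l ∈ Finset.range r, ((∑ j, matCol D.U l j * y j) / D.sv l) ^ 2) := by
  
  classical
  have hrp : r ≤ p := le_trans hr (min_le_left _ _)
  have hrn : r ≤ n := le_trans hr (min_le_right _ _)
  have hvn : (vnorm : (Fin p → ℝ) → ℝ) = LOOAux.vn := rfl
  rw [LOOAux.projr_eq D.U r] at hgap ⊢
  rw [LOOAux.projr_eq Dh.U r]
  simp only [hvn] at hgap ⊢
  set U := D.U with hUdef
  set Uh := Dh.U with hUhdef
  have hU : Uᵀ * U = 1 := D.hU
  have hUh : Uhᵀ * Uh = 1 := Dh.hU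
  have hUU : U * Uᵀ = 1 := mul_eq_one_comm.mp hU
  have hUhUh : Uh * Uhᵀ = 1 := mul_eq_one_comm.mp hUh
  set χ : Fin p → ℝ := LOOAux.chi p r with hχ
  set ν : Fin p → ℝ := fun i => D.sv (i : ℕ) ^ 2 with hν
  set μ : Fin p → ℝ := fun j => Dh.sv (j : ℕ) ^ 2 with hμ
  set Pc := U * diagonal χ * Uᵀ with hPc
  set Qc := Uh * diagonal χ * Uhᵀ with hQc
  set σs := D.sv (r - 1) with hσs
  set g : Fin p → ℝ := y - Pc.mulVec y with hg
  set γ := LOOAux.vn g with hγdef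
  set gap := σs ^ 2 - D.sv r ^ 2 - γ ^ 2 with hgapdef
  -- hgap : 0 < gap
  have hgap0 : 0 < gap := hgap
  have hγ_nonneg : 0 ≤ γ := LOOAux.vn_nonneg g
  have hσs_nonneg : 0 ≤ σs := D.sv_nonneg _
  have hRHS_nonneg : 0 ≤ 2 * Real.sqrt 2 * σs * γ / gap *
      Real.sqrt (∑ l ∈ Finset.range r, ((∑ j, matCol U l j * y j) / D.sv l) ^ 2) := by
    apply mul_nonneg _ (Real.sqrt_nonneg _)
    apply div_nonneg _ hgap0.le
    have h2 : (0:ℝ) ≤ 2 * Real.sqrt 2 := by positivity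
    exact mul_nonneg (mul_nonneg h2 hσs_nonneg) hγ_nonneg
  rcases lt_or_eq_of_le hrp with hrplt | hrpe
  · -- main case : r < p
    have hrplt : r < p := hrplt
    -- gram matrix representations
    have hMY : Y * Yᵀ = U * diagonal ν * Uᵀ := LOOAux.svd_gram D
    have hMYh : Yhat * Yhatᵀ = Uh * diagonal μ * Uhᵀ := LOOAux.svd_gram Dh
    have hsplit : Yhat * Yhatᵀ = Y * Yᵀ + vecMulVec y y := by
      ext i k
      simp only [Matrix.mul_apply, Matrix.add_apply, Matrix.transpose_apply,
        vecMulVec_apply]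
      rw [Fin.sum_univ_castSucc]
      simp [← hY, ← hy]
    have hμanti : ∀ i j : Fin p, i ≤ j → μ j ≤ μ i := by
      intro i j hij
      exact pow_le_pow_left₀ (Dh.sv_nonneg _) (Dh.sv_anti _ _ (Fin.le_def.mp hij)) 2
    have hνanti : ∀ i j : Fin p, i ≤ j → ν j ≤ ν i := by
      intro i j hij
      exact pow_le_pow_left₀ (D.sv_nonneg _) (D.sv_anti _ _ (Fin.le_def.mp hij)) 2
    have hμnn : ∀ j : Fin p, 0 ≤ μ j := fun j => sq_nonneg _
    have hνnn : ∀ j : Fin p, 0 ≤ ν j := fun j => sq_nonneg _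
    -- Ky Fan inequalities
    have tPMh_le : Matrix.trace (Pc * (Yhat * Yhatᵀ)) ≤ ∑ j, χ j * μ j := by
      rw [hMYh, hPc]
      exact LOOAux.kyfan hrplt hU hUh μ hμanti hμnn
    have tQM_le : Matrix.trace (Qc * (Y * Yᵀ)) ≤ ∑ j, χ j * ν j := by
      rw [hMY, hQc]
      exact LOOAux.kyfan hrplt hUh hU ν hνanti hνnn
    have tQMh_eq : Matrix.trace (Qc * (Yhat * Yhatᵀ)) = ∑ j, χ j * μ j := by
      rw [hMYh, hQc]
      exact LOOAux.trace_conj_same hUh χ μ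
    have tPM_eq : Matrix.trace (Pc * (Y * Yᵀ)) = ∑ j, χ j * ν j := by
      rw [hMY, hPc]
      exact LOOAux.trace_conj_same hU χ ν
    have tsplit : ∀ R : Matrix (Fin p) (Fin p) ℝ,
        Matrix.trace (R * (Yhat * Yhatᵀ))
          = Matrix.trace (R * (Y * Yᵀ)) + y ⬝ᵥ R.mulVec y := by
      intro R
      rw [hsplit, Matrix.mul_add, Matrix.trace_add, LOOAux.trace_mul_vecMulVec]
    have hyPQ : y ⬝ᵥ Pc.mulVec y ≤ y ⬝ᵥ Qc.mulVec y := by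
      have h1 := tsplit Pc
      have h2 := tsplit Qc
      linarith [tPMh_le, tQM_le, tQMh_eq, tPM_eq]
    -- projections are symmetric idempotent
    have hχχ : (fun l => χ l * χ l) = χ := funext fun l => LOOAux.chi_mul_self r l
    have hQid : Qcᵀ * Qc = Qc := by
      rw [hQc, LOOAux.conj_transpose_eq, LOOAux.conj_mul hUh, hχχ]
    have hPid : Pcᵀ * Pc = Pc := by
      rw [hPc, LOOAux.conj_transpose_eq, LOOAux.conj_mul hU, hχχ]
    set q : Fin p → ℝ := y - Qc.mulVec y with hq
    have hqg : ∑ k, (q k) ^ 2 ≤ ∑ k, (g k) ^ 2 := by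
      rw [hq, hg, LOOAux.proj_res_sq hQid y, LOOAux.proj_res_sq hPid y]
      linarith [hyPQ]
    have hqγ : LOOAux.vn q ≤ γ := LOOAux.vn_mono hqg
    -- Step 2 : the (r+1)-st squared singular value of Yhat is at most sv r ^2 + ||g||^2
    set K := Uᵀ * Uh with hK
    have hr1p : r + 1 ≤ p := hrplt
    set B : Matrix (Fin r) (Fin (r + 1)) ℝ :=
      Matrix.of fun i j => K (Fin.castLE hrp i) (Fin.castLE hr1p j) with hB
    obtain ⟨c, hc0, hBc⟩ := LOOAux.exists_ker (Nat.lt_succ_self r) B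
    set ct : Fin p → ℝ :=
      fun j => if hj : (j : ℕ) < r + 1 then c ⟨(j : ℕ), hj⟩ else 0 with hct
    set x : Fin p → ℝ := Uh.mulVec ct with hx
    have hct_hi : ∀ j : Fin p, r + 1 ≤ (j : ℕ) → ct j = 0 := by
      intro j hj
      simp only [hct]
      exact dif_neg (by omega)
    have hct_cast : ∀ j : Fin (r + 1), ct (Fin.castLE hr1p j) = c j := by
      intro j
      simp only [hct, Fin.coe_castLE, dif_pos j.isLt, Fin.eta]
    have hUhx : Uhᵀ.mulVec x = ct := by
      rw [hx, Matrix.mulVec_mulVec, hUh, Matrix.one_mulVec]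
    have hxsq : ∑ a, (x a) ^ 2 = ∑ j, (ct j) ^ 2 := by
      rw [hx]; exact LOOAux.mulVec_sq_sum hUh ct
    have hctc : ∑ j : Fin p, (ct j) ^ 2 = ∑ j : Fin (r + 1), (c j) ^ 2 := by
      rw [LOOAux.sum_trunc hr1p (fun j => (ct j) ^ 2)
        (fun j hj => by show (ct j) ^ 2 = 0; rw [hct_hi j hj]; norm_num)]
      exact Finset.sum_congr rfl fun j _ => by
        show (ct (Fin.castLE hr1p j)) ^ 2 = (c j) ^ 2
        rw [hct_cast j]
    have hcpos : 0 < ∑ j : Fin (r + 1), (c j) ^ 2 := by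
      obtain ⟨j0, hj0⟩ := Function.ne_iff.mp hc0
      refine Finset.sum_pos' (fun j _ => sq_nonneg _) ⟨j0, Finset.mem_univ _, ?_⟩
      have hne : c j0 ≠ 0 := by simpa using hj0
      positivity
    have hxpos : 0 < ∑ a, (x a) ^ 2 := by rw [hxsq, hctc]; exact hcpos
    have hUx0 : ∀ i : Fin p, (i : ℕ) < r → Uᵀ.mulVec x i = 0 := by
      intro i hi
      have e0 : Uᵀ.mulVec x = K.mulVec ct := by
        rw [hx, Matrix.mulVec_mulVec, hK]
      have e2 : ∑ j : Fin p, K i j * ct j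
          = ∑ j : Fin (r + 1), K i (Fin.castLE hr1p j) * c j := by
        rw [LOOAux.sum_trunc hr1p (fun j => K i j * ct j)
          (fun j hj => by show K i j * ct j = 0; rw [hct_hi j hj, mul_zero])]
        exact Finset.sum_congr rfl fun j _ => by
          show K i (Fin.castLE hr1p j) * ct (Fin.castLE hr1p j)
            = K i (Fin.castLE hr1p j) * c j
          rw [hct_cast j]
      have e3 : ∑ j : Fin (r + 1), K i (Fin.castLE hr1p j) * c j
          = B.mulVec c ⟨(i : ℕ), hi⟩ := by
        simp only [hB, Matrix.mulVec, dotProduct, Matrix.of_apply]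
        have hcast : Fin.castLE hrp ⟨(i : ℕ), hi⟩ = i := Fin.ext rfl
        rw [hcast]
      rw [e0]
      show ∑ j : Fin p, K i j * ct j = 0
      rw [e2, e3, hBc]
      rfl
    have hxMhx : x ⬝ᵥ (Yhat * Yhatᵀ).mulVec x = ∑ j, μ j * (ct j) ^ 2 := by
      rw [hMYh, LOOAux.quadForm, hUhx]
      exact Finset.sum_congr rfl fun j _ => by ring
    have hlow : μ ⟨r, hrplt⟩ * ∑ j, (ct j) ^ 2 ≤ ∑ j, μ j * (ct j) ^ 2 := by
      rw [Finset.mul_sum]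
      refine Finset.sum_le_sum fun j _ => ?_
      by_cases hj : (j : ℕ) < r + 1
      · have hle : μ ⟨r, hrplt⟩ ≤ μ j :=
          hμanti j ⟨r, hrplt⟩ (Fin.le_def.mpr (Nat.lt_succ_iff.mp hj))
        nlinarith [sq_nonneg (ct j)]
      · rw [hct_hi j (by omega)]; norm_num
    have hxMx : x ⬝ᵥ (Y * Yᵀ).mulVec x ≤ ν ⟨r, hrplt⟩ * ∑ a, (x a) ^ 2 := by
      rw [hMY, LOOAux.quadForm]
      have hUtx : ∑ i, (Uᵀ.mulVec x i) ^ 2 = ∑ a, (x a) ^ 2 :=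
        LOOAux.mulVec_sq_sum (by rw [Matrix.transpose_transpose]; exact hUU) x
      calc ∑ i, ν i * Uᵀ.mulVec x i * Uᵀ.mulVec x i
          ≤ ∑ i, ν ⟨r, hrplt⟩ * (Uᵀ.mulVec x i) ^ 2 := by
            refine Finset.sum_le_sum fun i _ => ?_
            by_cases hi : (i : ℕ) < r
            · rw [hUx0 i hi]; norm_num
            · have h1 : ν i ≤ ν ⟨r, hrplt⟩ :=
                hνanti ⟨r, hrplt⟩ i (Fin.le_def.mpr (Nat.le_of_not_lt hi))
              nlinarith [sq_nonneg (Uᵀ.mulVec x i), hνnn i]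
        _ = ν ⟨r, hrplt⟩ * ∑ a, (x a) ^ 2 := by rw [← Finset.mul_sum, hUtx]
    have hyx : (y ⬝ᵥ x) ^ 2 ≤ (∑ k, (g k) ^ 2) * ∑ a, (x a) ^ 2 := by
      have h0 : x ⬝ᵥ Pc.mulVec y = 0 := by
        rw [hPc, LOOAux.quadForm]
        refine Finset.sum_eq_zero fun i _ => ?_
        by_cases hi : (i : ℕ) < r
        · rw [hUx0 i hi]; ring
        · have hz : χ i = 0 := if_neg hi
          rw [hz]; ring
      have hgx : y ⬝ᵥ x = ∑ k, g k * x k := by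
        have h1 : ∑ k, g k * x k = ∑ k, y k * x k - ∑ k, (Pc.mulVec y) k * x k := by
          rw [← Finset.sum_sub_distrib]
          refine Finset.sum_congr rfl fun k _ => ?_
          rw [hg]; simp only [Pi.sub_apply]; ring
        have h2 : ∑ k, (Pc.mulVec y) k * x k = x ⬝ᵥ Pc.mulVec y := by
          simp only [dotProduct]
          exact Finset.sum_congr rfl fun k _ => by ring
        rw [h1, h2, h0, sub_zero]
        rfl
      rw [hgx]
      exact Finset.sum_mul_sq_le_sq_mul_sq Finset.univ g x
    have step2 : μ ⟨r, hrplt⟩ ≤ ν ⟨r, hrplt⟩ + ∑ k, (g k) ^ 2 := by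
      have hc1 : x ⬝ᵥ (Yhat * Yhatᵀ).mulVec x
          = x ⬝ᵥ (Y * Yᵀ).mulVec x + (y ⬝ᵥ x) ^ 2 := by
        rw [hsplit, Matrix.add_mulVec, dotProduct_add, LOOAux.dot_vecMulVec_self]
      have hchain : μ ⟨r, hrplt⟩ * ∑ a, (x a) ^ 2
          ≤ (ν ⟨r, hrplt⟩ + ∑ k, (g k) ^ 2) * ∑ a, (x a) ^ 2 := by
        calc μ ⟨r, hrplt⟩ * ∑ a, (x a) ^ 2
            = μ ⟨r, hrplt⟩ * ∑ j, (ct j) ^ 2 := by rw [hxsq]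
          _ ≤ ∑ j, μ j * (ct j) ^ 2 := hlow
          _ = x ⬝ᵥ (Yhat * Yhatᵀ).mulVec x := hxMhx.symm
          _ = x ⬝ᵥ (Y * Yᵀ).mulVec x + (y ⬝ᵥ x) ^ 2 := hc1
          _ ≤ ν ⟨r, hrplt⟩ * ∑ a, (x a) ^ 2
              + (∑ k, (g k) ^ 2) * ∑ a, (x a) ^ 2 := add_le_add hxMx hyx
          _ = (ν ⟨r, hrplt⟩ + ∑ k, (g k) ^ 2) * ∑ a, (x a) ^ 2 := by ring
      exact le_of_mul_le_mul_right hchain hxpos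
    -- scalar preliminaries
    have hγ2 : γ ^ 2 = ∑ k, (g k) ^ 2 := by rw [hγdef]; exact LOOAux.vn_sq g
    have hσs_pos : 0 < σs := by
      have h2 : 0 < σs ^ 2 := by nlinarith [sq_nonneg (D.sv r), sq_nonneg γ]
      rcases lt_or_eq_of_le hσs_nonneg with h | h
      · exact h
      · exfalso; rw [← h] at h2; simp at h2
    have hgap_le : gap ≤ σs ^ 2 := by
      rw [hgapdef]; nlinarith [sq_nonneg (D.sv r), sq_nonneg γ]
    -- per-column bound
    have percol : ∀ i : Fin p, (i : ℕ) < r →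
        (LOOAux.vn ((fun a => U a i) - Qc.mulVec (fun a => U a i))) ^ 2
          ≤ (2 * σs * γ / gap) ^ 2 * (((fun a => U a i) ⬝ᵥ y) / D.sv (i : ℕ)) ^ 2 := by
      intro i hi
      set u : Fin p → ℝ := fun a => U a i with hu
      set fv : Fin p → ℝ := u - Qc.mulVec u with hfv
      set ti : ℝ := u ⬝ᵥ y with hti
      set si := D.sv (i : ℕ) with hsi
      -- coordinates of u in the two bases
      have hUtu : Uᵀ.mulVec u = fun j => (1 : Matrix (Fin p) (Fin p) ℝ) j i := by
        funext j
        rw [show (1 : Matrix (Fin p) (Fin p) ℝ) = Uᵀ * U from hU.symm]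
        simp only [Matrix.mulVec, dotProduct, Matrix.mul_apply, Matrix.transpose_apply, hu]
      have hzK : Uhᵀ.mulVec u = fun j => K i j := by
        funext j
        simp only [Matrix.mulVec, dotProduct, Matrix.transpose_apply, hK,
          Matrix.mul_apply, hu]
        exact Finset.sum_congr rfl fun a _ => by ring
      have hMYu : (Y * Yᵀ).mulVec u = ν i • u := by
        rw [hMY, ← Matrix.mulVec_mulVec, ← Matrix.mulVec_mulVec, hUtu, LOOAux.diag_mulVec]
        funext a
        simp only [Matrix.mulVec, dotProduct, Pi.smul_apply, smul_eq_mul, hu]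
        rw [Finset.sum_eq_single i]
        · rw [Matrix.one_apply_eq]; ring
        · intro j _ hj
          rw [Matrix.one_apply_ne hj]; ring
        · exact fun hh => absurd (Finset.mem_univ _) hh
      have hvecu : (vecMulVec y y).mulVec u = ti • y := by
        funext a
        simp only [Matrix.mulVec, dotProduct, vecMulVec_apply, Pi.smul_apply,
          smul_eq_mul, hti, hu]
        rw [Finset.sum_mul]
        exact Finset.sum_congr rfl fun b _ => by ring
      have hMhu : (Yhat * Yhatᵀ).mulVec u = ν i • u + ti • y := by
        rw [hsplit, Matrix.add_mulVec, hMYu, hvecu]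
      have hIq : (1 : Matrix (Fin p) (Fin p) ℝ) - Qc
          = Uh * diagonal (fun j => 1 - χ j) * Uhᵀ := by
        have h1 : (1 : Matrix (Fin p) (Fin p) ℝ)
            = Uh * diagonal (fun _ => (1:ℝ)) * Uhᵀ := by
          rw [Matrix.diagonal_one, Matrix.mul_one, hUhUh]
        rw [hQc]
        conv_lhs => rw [h1]
        rw [← Matrix.sub_mul, ← Matrix.mul_sub, Matrix.diagonal_sub]
      have hNM : ((1 : Matrix (Fin p) (Fin p) ℝ) - Qc) * (Yhat * Yhatᵀ)
          = Uh * diagonal (fun j => (1 - χ j) * μ j) * Uhᵀ := by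
        rw [hIq, hMYh, LOOAux.conj_mul hUh]
      have h1 : ((1 : Matrix (Fin p) (Fin p) ℝ) - Qc).mulVec ((Yhat * Yhatᵀ).mulVec u)
          = ν i • fv + ti • q := by
        rw [hMhu, Matrix.mulVec_add, Matrix.mulVec_smul, Matrix.mulVec_smul,
          Matrix.sub_mulVec, Matrix.sub_mulVec, Matrix.one_mulVec, Matrix.one_mulVec,
          hfv, hq]
      have h2 : ((1 : Matrix (Fin p) (Fin p) ℝ) - Qc).mulVec ((Yhat * Yhatᵀ).mulVec u)
          = Uh.mulVec (fun j => ((1 - χ j) * μ j) * K i j) := by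
        rw [Matrix.mulVec_mulVec, hNM, ← Matrix.mulVec_mulVec, ← Matrix.mulVec_mulVec,
          hzK, LOOAux.diag_mulVec]
      have key : ν i • fv + ti • q = Uh.mulVec (fun j => ((1 - χ j) * μ j) * K i j) :=
        h1.symm.trans h2
      have hurep : u = Uh.mulVec (fun j => K i j) := by
        have e : Uh.mulVec (Uhᵀ.mulVec u) = u := by
          rw [Matrix.mulVec_mulVec, hUhUh, Matrix.one_mulVec]
        rw [← e, hzK]
      have hQu : Qc.mulVec u = Uh.mulVec (fun j => χ j * K i j) := by
        rw [hQc, ← Matrix.mulVec_mulVec, ← Matrix.mulVec_mulVec, hzK, LOOAux.diag_mulVec]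
      have hfrep : fv = Uh.mulVec (fun j => (1 - χ j) * K i j) := by
        rw [hfv, hQu]
        rw [show u = Uh.mulVec (fun j => K i j) from hurep]
        rw [← Matrix.mulVec_sub]
        have harg : ((fun j => K i j) - fun j => χ j * K i j)
            = fun j => (1 - χ j) * K i j := by
          funext j
          show K i j - χ j * K i j = (1 - χ j) * K i j
          ring
        rw [harg]
      have hfv_sq : (LOOAux.vn fv) ^ 2 = ∑ j, ((1 - χ j) * K i j) ^ 2 := by
        rw [LOOAux.vn_sq, hfrep]
        exact LOOAux.mulVec_sq_sum hUh _
      have hμr_nonneg : 0 ≤ μ ⟨r, hrplt⟩ := hμnn _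
      have hvn1 : LOOAux.vn (Uh.mulVec (fun j => ((1 - χ j) * μ j) * K i j))
          ≤ μ ⟨r, hrplt⟩ * LOOAux.vn fv := by
        have ha : (LOOAux.vn (Uh.mulVec (fun j => ((1 - χ j) * μ j) * K i j))) ^ 2
            = ∑ j, (((1 - χ j) * μ j) * K i j) ^ 2 := by
          rw [LOOAux.vn_sq]
          exact LOOAux.mulVec_sq_sum hUh _
        have hb : ∑ j, (((1 - χ j) * μ j) * K i j) ^ 2
            ≤ (μ ⟨r, hrplt⟩) ^ 2 * ∑ j, ((1 - χ j) * K i j) ^ 2 := by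
          rw [Finset.mul_sum]
          refine Finset.sum_le_sum fun j _ => ?_
          by_cases hj : (j : ℕ) < r
          · have hz : χ j = 1 := if_pos hj
            rw [hz]; norm_num
          · have hz : χ j = 0 := if_neg hj
            have hμ1 : μ j ≤ μ ⟨r, hrplt⟩ :=
              hμanti ⟨r, hrplt⟩ j (Fin.le_def.mpr (Nat.le_of_not_lt hj))
            have hμ2 : 0 ≤ μ j := hμnn j
            have hμ3 : μ j * μ j ≤ μ ⟨r, hrplt⟩ * μ ⟨r, hrplt⟩ :=
              mul_le_mul hμ1 hμ1 hμ2 (hμ2.trans hμ1)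
            rw [hz]
            nlinarith [sq_nonneg (K i j)]
        have hc : (LOOAux.vn (Uh.mulVec (fun j => ((1 - χ j) * μ j) * K i j))) ^ 2
            ≤ (μ ⟨r, hrplt⟩ * LOOAux.vn fv) ^ 2 := by
          rw [ha, mul_pow, hfv_sq]
          exact hb
        exact le_of_pow_le_pow_left₀ two_ne_zero
          (mul_nonneg hμr_nonneg (LOOAux.vn_nonneg fv)) hc
      have htri : ν i * LOOAux.vn fv
          ≤ μ ⟨r, hrplt⟩ * LOOAux.vn fv + |ti| * LOOAux.vn q := by
        have ht1 : ν i • fv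
            = Uh.mulVec (fun j => ((1 - χ j) * μ j) * K i j) - ti • q := by
          rw [← key]; abel
        have ht2 : LOOAux.vn (ν i • fv) = ν i * LOOAux.vn fv := by
          rw [LOOAux.vn_smul, abs_of_nonneg (hνnn i)]
        have ht3 := LOOAux.vn_sub_le
          (Uh.mulVec (fun j => ((1 - χ j) * μ j) * K i j)) (ti • q)
        rw [← ht1, ht2, LOOAux.vn_smul] at ht3
        exact le_trans ht3 (add_le_add hvn1 le_rfl)
      -- scalar endgame
      have hsia : σs ≤ si := by
        rw [hσs, hsi]; exact D.sv_anti _ _ (by omega)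
      have hstep2' : μ ⟨r, hrplt⟩ ≤ D.sv r ^ 2 + γ ^ 2 := by
        have h := step2
        rw [← hγ2] at h
        exact h
      exact LOOAux.col_scalar hσs_pos hsia hgap0 hgapdef htri hstep2' hqγ
        (LOOAux.vn_nonneg fv) hγ_nonneg (LOOAux.vn_nonneg q)
    -- Frobenius norm identity and final assembly
    have hQsym : Qcᵀ = Qc := by rw [hQc]; exact LOOAux.conj_transpose_eq χ
    have hPsym : Pcᵀ = Pc := by rw [hPc]; exact LOOAux.conj_transpose_eq χ
    have hsym : (Qc - Pc)ᵀ = Qc - Pc := by rw [Matrix.transpose_sub, hQsym, hPsym]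
    have tQQ : Matrix.trace (Qc * Qc) = ∑ j, χ j := by
      rw [hQc, LOOAux.trace_conj_same hUh]
      exact Finset.sum_congr rfl fun j _ => LOOAux.chi_mul_self r j
    have tPP : Matrix.trace (Pc * Pc) = ∑ j, χ j := by
      rw [hPc, LOOAux.trace_conj_same hU]
      exact Finset.sum_congr rfl fun j _ => LOOAux.chi_mul_self r j
    have hFro : ∑ a, ∑ b, ((Qc - Pc) a b) ^ 2
        = 2 * (∑ j, χ j) - 2 * Matrix.trace (Pc * Qc) := by
      rw [LOOAux.sum_sq_eq_trace hsym]
      rw [Matrix.sub_mul, Matrix.mul_sub, Matrix.mul_sub, Matrix.trace_sub,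
        Matrix.trace_sub, Matrix.trace_sub, tQQ, tPP, Matrix.trace_mul_comm Qc Pc]
      ring
    -- per-column residual identity
    have hcolsum : ∀ i : Fin p, (i : ℕ) < r →
        (LOOAux.vn ((fun a => U a i) - Qc.mulVec (fun a => U a i))) ^ 2
          = 1 - ∑ j, χ j * (K i j) ^ 2 := by
      intro i hi
      rw [LOOAux.vn_sq, LOOAux.proj_res_sq hQid (fun a => U a i)]
      have h1 : ∑ k, ((fun a => U a i) k) ^ 2 = (1:ℝ) := by
        have h5 := congrFun (congrFun hU i) i
        rw [Matrix.mul_apply] at h5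
        rw [show (1:ℝ) = (1 : Matrix (Fin p) (Fin p) ℝ) i i from (Matrix.one_apply_eq i).symm,
          ← h5]
        exact Finset.sum_congr rfl fun a _ => by rw [Matrix.transpose_apply, sq]
      have h2 : (fun a => U a i) ⬝ᵥ Qc.mulVec (fun a => U a i) = ∑ j, χ j * (K i j) ^ 2 := by
        rw [hQc, LOOAux.quadForm]
        refine Finset.sum_congr rfl fun j _ => ?_
        have hz : Uhᵀ.mulVec (fun a => U a i) j = K i j := by
          simp only [Matrix.mulVec, dotProduct, Matrix.transpose_apply, hK,
            Matrix.mul_apply]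
          exact Finset.sum_congr rfl fun a _ => by ring
        rw [hz, sq]; ring
      rw [h1, h2]
    have tPQ : Matrix.trace (Pc * Qc) = ∑ i, ∑ j, χ i * (χ j * (K i j) ^ 2) := by
      rw [hPc, hQc, LOOAux.trace_conj]
      exact Finset.sum_congr rfl fun i _ => Finset.sum_congr rfl fun j _ => by ring
    have hsplit_sum : ∑ i, χ i *
          (LOOAux.vn ((fun a => U a i) - Qc.mulVec (fun a => U a i))) ^ 2
        = (∑ j, χ j) - Matrix.trace (Pc * Qc) := by
      rw [tPQ, ← Finset.sum_sub_distrib]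
      refine Finset.sum_congr rfl fun i _ => ?_
      by_cases hi : (i : ℕ) < r
      · have hz : χ i = 1 := if_pos hi
        rw [hcolsum i hi, hz]
        simp only [one_mul]
      · have hz : χ i = 0 := if_neg hi
        rw [hz]
        simp
    have hsum_le : ∑ i, χ i *
          (LOOAux.vn ((fun a => U a i) - Qc.mulVec (fun a => U a i))) ^ 2
        ≤ (2 * σs * γ / gap) ^ 2
          * ∑ i, χ i * (((fun a => U a i) ⬝ᵥ y) / D.sv (i : ℕ)) ^ 2 := by
      rw [Finset.mul_sum]
      refine Finset.sum_le_sum fun i _ => ?_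
      by_cases hi : (i : ℕ) < r
      · have hz : χ i = 1 := if_pos hi
        rw [hz, one_mul, one_mul]
        exact percol i hi
      · have hz : χ i = 0 := if_neg hi
        rw [hz]
        simp
    have hconv : ∑ i, χ i * (((fun a => U a i) ⬝ᵥ y) / D.sv (i : ℕ)) ^ 2
        = ∑ l ∈ Finset.range r, ((∑ j, matCol U l j * y j) / D.sv l) ^ 2 := by
      rw [LOOAux.sum_trunc hrp (fun i => χ i * (((fun a => U a i) ⬝ᵥ y) / D.sv (i : ℕ)) ^ 2)
        (fun i hi => by
          show χ i * (((fun a => U a i) ⬝ᵥ y) / D.sv (i : ℕ)) ^ 2 = 0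
          have hz : χ i = 0 := if_neg (Nat.not_lt.mpr hi)
          rw [hz, zero_mul])]
      rw [← Fin.sum_univ_eq_sum_range
        (fun l => ((∑ j, matCol U l j * y j) / D.sv l) ^ 2) r]
      refine Finset.sum_congr rfl fun i _ => ?_
      show χ (Fin.castLE hrp i) * (((fun a => U a (Fin.castLE hrp i)) ⬝ᵥ y)
        / D.sv ((Fin.castLE hrp i : Fin p) : ℕ)) ^ 2
          = ((∑ j, matCol U (i : ℕ) j * y j) / D.sv (i : ℕ)) ^ 2
      have hz : χ (Fin.castLE hrp i) = 1 := if_pos i.isLt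
      have hdot : (fun a => U a (Fin.castLE hrp i)) ⬝ᵥ y
          = ∑ j, matCol U (i : ℕ) j * y j := by
        simp only [dotProduct, matCol]
        refine Finset.sum_congr rfl fun j _ => ?_
        rw [dif_pos (lt_of_lt_of_le i.isLt hrp)]
        congr 1
      rw [hz, one_mul, hdot]
      simp [Fin.coe_castLE]
    -- put everything together
    have hfr : ∑ a, ∑ b, ((Qc - Pc) a b) ^ 2
        ≤ 2 * ((2 * σs * γ / gap) ^ 2
          * ∑ l ∈ Finset.range r, ((∑ j, matCol U l j * y j) / D.sv l) ^ 2) := by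
      rw [hFro]
      have h2 := hsum_le
      rw [hconv] at h2
      linarith [h2, hsplit_sum]
    have hfnorm_eq : fnorm (Qc - Pc)
        = Real.sqrt (∑ a, ∑ b, ((Qc - Pc) a b) ^ 2) := rfl
    rw [hfnorm_eq]
    have hc_nonneg : 0 ≤ 2 * σs * γ / gap :=
      div_nonneg (mul_nonneg (mul_nonneg (by norm_num) hσs_nonneg) hγ_nonneg) hgap0.le
    have hS_nonneg : 0 ≤ ∑ l ∈ Finset.range r, ((∑ j, matCol U l j * y j) / D.sv l) ^ 2 :=
      Finset.sum_nonneg fun l _ => sq_nonneg _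
    have hformula : 2 * Real.sqrt 2 * σs * γ / gap *
        Real.sqrt (∑ l ∈ Finset.range r, ((∑ j, matCol U l j * y j) / D.sv l) ^ 2)
        = Real.sqrt (2 * ((2 * σs * γ / gap) ^ 2
          * ∑ l ∈ Finset.range r, ((∑ j, matCol U l j * y j) / D.sv l) ^ 2)) := by
      rw [Real.sqrt_mul (by norm_num : (0:ℝ) ≤ 2), Real.sqrt_mul (sq_nonneg _),
        Real.sqrt_sq hc_nonneg]
      ring
    rw [hformula]
    exact Real.sqrt_le_sqrt hfr
  · -- r = p : both projections are the identity
    have hχ1 : χ = fun _ => (1:ℝ) := by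
      funext l
      simp only [hχ, LOOAux.chi]
      exact if_pos (by rw [hrpe]; exact l.isLt)
    have hd1 : (diagonal (fun _ => (1:ℝ)) : Matrix (Fin p) (Fin p) ℝ) = 1 :=
      Matrix.diagonal_one
    have hPc1 : Pc = 1 := by rw [hPc, hχ1, hd1, Matrix.mul_one, hUU]
    have hQc1 : Qc = 1 := by rw [hQc, hχ1, hd1, Matrix.mul_one, hUhUh]
    rw [hQc1, hPc1, sub_self]
    have h0 : fnorm (0 : Matrix (Fin p) (Fin p) ℝ) = 0 := by
      unfold fnorm; simp
    rw [h0]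
    exact hRHS_nonneg
end
end

section
/- If σ_r − σ_{r+1} > 2‖(I − U_r U_rᵀ) y_n‖, then for any choice of leading-r orthonormal left singular vectors Û_r of Ŷ, ‖Û_r Û_rᵀ − U_r U_rᵀ‖_F ≤ 2‖(I − U_r U_rᵀ) y_n‖ / (σ_r − σ_{r+1}). -/
open Matrix MeasureTheory ProbabilityTheory
open scoped BigOperators ENNReal NNReal

noncomputable section

namespace LOW


def dot {m : ℕ} (x y : Fin m → ℝ) : ℝ := ∑ i, x i * y i

lemma dot_comm {m : ℕ} (x y : Fin m → ℝ) : dot x y = dot y x :=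
  Finset.sum_congr rfl fun i _ => mul_comm _ _

lemma dot_self_nonneg {m : ℕ} (x : Fin m → ℝ) : 0 ≤ dot x x :=
  Finset.sum_nonneg fun i _ => mul_self_nonneg _

lemma eq_zero_of_dot_self_eq_zero {m : ℕ} {x : Fin m → ℝ} (h : dot x x = 0) :
    ∀ i, x i = 0 := by
  intro i
  have := Finset.sum_eq_zero_iff_of_nonneg
    (fun i (_ : i ∈ Finset.univ) => mul_self_nonneg (x i)) |>.mp h i (Finset.mem_univ i)
  nlinarith [this]


lemma dot_zero_left {m : ℕ} (x : Fin m → ℝ) : dot (fun _ => 0) x = 0 := by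
  show (∑ i, (0:ℝ) * x i) = 0
  simp

lemma dot_zero_right {m : ℕ} (x : Fin m → ℝ) : dot x (fun _ => 0) = 0 := by
  show (∑ i, x i * 0) = 0
  simp

lemma mulVec_raw {pp q : ℕ} (A : Matrix (Fin pp) (Fin q) ℝ) (z : Fin q → ℝ) (i : Fin pp) :
    A.mulVec z i = ∑ j, A i j * z j := rfl

lemma dot_mulVec {pp q : ℕ} (A : Matrix (Fin pp) (Fin q) ℝ) (x : Fin pp → ℝ) (z : Fin q → ℝ) :
    dot x (A.mulVec z) = dot (Aᵀ.mulVec x) z := by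
  show (∑ i, x i * A.mulVec z i) = ∑ j, Aᵀ.mulVec x j * z j
  simp only [mulVec_raw, Matrix.transpose_apply]
  calc ∑ i, x i * ∑ j, A i j * z j = ∑ i, ∑ j, x i * (A i j * z j) := by
        exact Finset.sum_congr rfl fun i _ => Finset.mul_sum _ _ _
    _ = ∑ j, ∑ i, x i * (A i j * z j) := Finset.sum_comm
    _ = ∑ j, (∑ i, A i j * x i) * z j := by
        refine Finset.sum_congr rfl fun j _ => ?_
        rw [Finset.sum_mul]
        exact Finset.sum_congr rfl fun i _ => by ring

/-- double sum expansion of dot of linear combinations -/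
lemma dot_sum_sum {m q1 q2 : ℕ} (α : Fin q1 → ℝ) (β : Fin q2 → ℝ)
    (f : Fin q1 → Fin m → ℝ) (h : Fin q2 → Fin m → ℝ) :
    dot (fun i => ∑ a, α a * f a i) (fun i => ∑ b, β b * h b i)
      = ∑ a, ∑ b, α a * β b * dot (f a) (h b) := by
  show (∑ i, (∑ a, α a * f a i) * (∑ b, β b * h b i))
      = ∑ a, ∑ b, α a * β b * ∑ i, f a i * h b i
  calc ∑ i, (∑ a, α a * f a i) * (∑ b, β b * h b i)
      = ∑ i, ∑ a, ∑ b, (α a * f a i) * (β b * h b i) := by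
        exact Finset.sum_congr rfl fun i _ => Finset.sum_mul_sum _ _ _ _
    _ = ∑ a, ∑ i, ∑ b, (α a * f a i) * (β b * h b i) := Finset.sum_comm
    _ = ∑ a, ∑ b, ∑ i, (α a * f a i) * (β b * h b i) :=
        Finset.sum_congr rfl fun a _ => Finset.sum_comm
    _ = ∑ a, ∑ b, α a * β b * ∑ i, f a i * h b i := by
        refine Finset.sum_congr rfl fun a _ => Finset.sum_congr rfl fun b _ => ?_
        rw [Finset.mul_sum]
        exact Finset.sum_congr rfl fun i _ => by ring

/-- restricted sum over `Fin p` with indicator `< r` equals sum over `Fin r` -/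
lemma sum_ite_lt {p r : ℕ} (hr : r ≤ p) (f : Fin p → ℝ) :
    (∑ m : Fin p, if (m : ℕ) < r then f m else 0) = ∑ k : Fin r, f (Fin.castLE hr k) := by
  have hset : (Finset.univ.filter fun m : Fin p => (m : ℕ) < r)
      = Finset.univ.map (Fin.castLEEmb hr) := by
    ext x
    simp only [Finset.mem_filter, Finset.mem_map, Finset.mem_univ, true_and]
    constructor
    · intro hx; exact ⟨⟨(x : ℕ), hx⟩, by simp [Fin.castLEEmb]⟩
    · rintro ⟨k, rfl⟩
      simpa [Fin.castLEEmb] using k.2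
  rw [← Finset.sum_filter, hset, Finset.sum_map]
  rfl

lemma sum_indicator_card {p r : ℕ} (hr : r ≤ p) :
    (∑ m : Fin p, if (m : ℕ) < r then (1 : ℝ) else 0) = r := by
  rw [sum_ite_lt hr]; simp

/-- Parseval for a full orthonormal system of `p` vectors in `ℝ^p`. -/
lemma parseval {p : ℕ} (f : Fin p → Fin p → ℝ)
    (h : ∀ j k, dot (f j) (f k) = if j = k then 1 else 0) (z : Fin p → ℝ) :
    ∑ j, (dot (f j) z) ^ 2 = dot z z := by
  classical
  have hrow : ∀ x y : Fin p, (∑ j, f j x * f j y) = if x = y then 1 else 0 := by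
    intro x y
    let F : Matrix (Fin p) (Fin p) ℝ := Matrix.of fun j i => f j i
    have hFFt : F * Fᵀ = 1 := by
      ext j k
      simpa [F, Matrix.mul_apply, Matrix.one_apply, dot] using h j k
    have hFtF : Fᵀ * F = 1 := mul_eq_one_comm.mp hFFt
    have := congrFun (congrFun hFtF x) y
    simpa [F, Matrix.mul_apply, Matrix.one_apply] using this
  show (∑ j, (∑ i, f j i * z i) ^ 2) = ∑ i, z i * z i
  calc ∑ j, (∑ x, f j x * z x) ^ 2
      = ∑ j, ∑ x, ∑ y, z x * z y * (f j x * f j y) := by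
        refine Finset.sum_congr rfl fun j _ => ?_
        rw [sq, Finset.sum_mul_sum]
        exact Finset.sum_congr rfl fun x _ => Finset.sum_congr rfl fun y _ => by ring
    _ = ∑ x, ∑ y, z x * z y * (∑ j, f j x * f j y) := by
        rw [Finset.sum_comm]
        refine Finset.sum_congr rfl fun x _ => ?_
        rw [Finset.sum_comm]
        refine Finset.sum_congr rfl fun y _ => (Finset.mul_sum _ _ _).symm
    _ = ∑ x, z x * z x := by
        refine Finset.sum_congr rfl fun x _ => ?_
        rw [Finset.sum_congr rfl fun y (_ : y ∈ Finset.univ) => by rw [hrow x y]]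
        simp

/-- Bessel inequality for a pairwise-orthogonal family with norms ≤ 1. -/
lemma bessel {q m : ℕ} (f : Fin q → Fin m → ℝ)
    (horth : ∀ j k, j ≠ k → dot (f j) (f k) = 0)
    (hdiag : ∀ j, dot (f j) (f j) ≤ 1) (z : Fin m → ℝ) :
    ∑ j, (dot (f j) z) ^ 2 ≤ dot z z := by
  classical
  set c : Fin q → ℝ := fun j => dot (f j) z with hc
  have hpos : (0:ℝ) ≤ ∑ i, (z i - ∑ j, c j * f j i) * (z i - ∑ j, c j * f j i) :=
    Finset.sum_nonneg fun i _ => mul_self_nonneg _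
  have e1 : (∑ i, (∑ j, c j * f j i) * z i) = ∑ j, c j ^ 2 := by
    calc ∑ i, (∑ j, c j * f j i) * z i
        = ∑ i, ∑ j, c j * f j i * z i := by
          exact Finset.sum_congr rfl fun i _ => Finset.sum_mul _ _ _
      _ = ∑ j, ∑ i, c j * f j i * z i := Finset.sum_comm
      _ = ∑ j, c j ^ 2 := by
          refine Finset.sum_congr rfl fun j _ => ?_
          have : (∑ i, c j * f j i * z i) = c j * ∑ i, f j i * z i := by
            rw [Finset.mul_sum]
            exact Finset.sum_congr rfl fun i _ => by ring
          rw [this]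
          have : (∑ i, f j i * z i) = c j := rfl
          rw [this, sq]
  have e2 : (∑ i, (∑ j, c j * f j i) * (∑ j, c j * f j i))
      = ∑ j, c j ^ 2 * dot (f j) (f j) := by
    have := dot_sum_sum c c f f
    have h2 : dot (fun i => ∑ a, c a * f a i) (fun i => ∑ b, c b * f b i)
        = ∑ i, (∑ j, c j * f j i) * (∑ j, c j * f j i) := rfl
    rw [h2] at this
    rw [this]
    refine Finset.sum_congr rfl fun j _ => ?_
    rw [Finset.sum_eq_single j]
    · ring
    · intro k _ hk; rw [horth j k (Ne.symm hk)]; ring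
    · intro hk; exact absurd (Finset.mem_univ j) hk
  have expand : (∑ i, (z i - ∑ j, c j * f j i) * (z i - ∑ j, c j * f j i))
      = dot z z - 2 * (∑ j, c j ^ 2) + ∑ j, c j ^ 2 * dot (f j) (f j) := by
    have : ∀ i, (z i - ∑ j, c j * f j i) * (z i - ∑ j, c j * f j i)
        = z i * z i - 2 * ((∑ j, c j * f j i) * z i)
          + (∑ j, c j * f j i) * (∑ j, c j * f j i) := by intro i; ring
    rw [Finset.sum_congr rfl fun i _ => this i]
    rw [Finset.sum_add_distrib, Finset.sum_sub_distrib, ← Finset.mul_sum, e1, e2]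
    rfl
  rw [expand] at hpos
  have hle : (∑ j, c j ^ 2 * dot (f j) (f j)) ≤ ∑ j, c j ^ 2 :=
    Finset.sum_le_sum fun j _ => by
      nlinarith [sq_nonneg (c j), hdiag j]
  have : (∑ j, c j ^ 2) ≤ dot z z := by linarith
  calc ∑ j, (dot (f j) z) ^ 2 = ∑ j, c j ^ 2 := rfl
    _ ≤ dot z z := this


lemma cols_orthonormal {m : ℕ} {W : Matrix (Fin m) (Fin m) ℝ} (hW : Wᵀ * W = 1) (a b : Fin m) :
    dot (fun i => W i a) (fun i => W i b) = if a = b then 1 else 0 := by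
  have := congrFun (congrFun hW a) b
  simpa [Matrix.mul_apply, Matrix.one_apply, dot] using this

lemma sum_col_mul_col {m : ℕ} {W : Matrix (Fin m) (Fin m) ℝ} (hW : Wᵀ * W = 1) (a b : Fin m) :
    (∑ i, W i a * W i b) = if a = b then 1 else 0 := cols_orthonormal hW a b

lemma svd_entry {p n : ℕ} {A : Matrix (Fin p) (Fin n) ℝ} (Dd : SVDData p n A)
    (i : Fin p) (j : Fin n) :
    A i j = ∑ a : Fin p, if h : (a : ℕ) < n then Dd.U i a * Dd.sv a * Dd.V j ⟨(a : ℕ), h⟩ else 0 := by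
  classical
  have h1 : A i j = ∑ b : Fin n, (∑ a : Fin p,
      Dd.U i a * (if (a : ℕ) = (b : ℕ) then Dd.sv (a : ℕ) else 0)) * Dd.V j b := by
    conv_lhs => rw [Dd.decomp]
    rw [Matrix.mul_apply]
    refine Finset.sum_congr rfl fun b _ => ?_
    rw [Matrix.mul_apply]
    rfl
  rw [h1]
  have h2 : ∀ b : Fin n, (∑ a : Fin p,
      Dd.U i a * (if (a : ℕ) = (b : ℕ) then Dd.sv (a : ℕ) else 0)) * Dd.V j b
      = ∑ a : Fin p, Dd.U i a * (if (a : ℕ) = (b : ℕ) then Dd.sv (a : ℕ) else 0) * Dd.V j b := by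
    intro b; rw [Finset.sum_mul]
  rw [Finset.sum_congr rfl fun b _ => h2 b, Finset.sum_comm]
  refine Finset.sum_congr rfl fun a _ => ?_
  by_cases h : (a : ℕ) < n
  · rw [dif_pos h]
    rw [Finset.sum_eq_single (⟨(a : ℕ), h⟩ : Fin n)]
    · simp
    · intro b _ hb
      have : (a : ℕ) ≠ (b : ℕ) := fun hab => hb (by simp [Fin.ext_iff, ← hab])
      simp [this]
    · intro hb; exact absurd (Finset.mem_univ _) hb
  · rw [dif_neg h]
    refine Finset.sum_eq_zero fun b _ => ?_
    have : (a : ℕ) ≠ (b : ℕ) := by have := b.2; omega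
    simp [this]

lemma svd_mulVec_col {p n : ℕ} {A : Matrix (Fin p) (Fin n) ℝ} (Dd : SVDData p n A)
    (j : Fin n) (hj : (j : ℕ) < p) :
    A.mulVec (fun k => Dd.V k j) = fun i => Dd.sv (j : ℕ) * Dd.U i ⟨(j : ℕ), hj⟩ := by
  classical
  funext i
  show (∑ x : Fin n, A i x * Dd.V x j) = _
  have h1 : ∀ x : Fin n, A i x * Dd.V x j = ∑ a : Fin p,
      (if h : (a : ℕ) < n then Dd.U i a * Dd.sv a * (Dd.V x ⟨(a : ℕ), h⟩ * Dd.V x j) else 0) := by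
    intro x
    rw [svd_entry Dd i x, Finset.sum_mul]
    refine Finset.sum_congr rfl fun a _ => ?_
    by_cases h : (a : ℕ) < n <;> simp [h, mul_assoc]
  rw [Finset.sum_congr rfl fun x _ => h1 x, Finset.sum_comm]
  have h2 : ∀ a : Fin p, (∑ x : Fin n,
      if h : (a : ℕ) < n then Dd.U i a * Dd.sv a * (Dd.V x ⟨(a : ℕ), h⟩ * Dd.V x j) else 0)
      = if h : (a : ℕ) < n then
          Dd.U i a * Dd.sv a * (if (⟨(a : ℕ), h⟩ : Fin n) = j then 1 else 0) else 0 := by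
    intro a
    by_cases h : (a : ℕ) < n
    · simp only [dif_pos h]
      rw [← Finset.mul_sum, sum_col_mul_col Dd.hV]
    · simp only [dif_neg h, Finset.sum_const_zero]
  rw [Finset.sum_congr rfl fun a _ => h2 a]
  rw [Finset.sum_eq_single (⟨(j : ℕ), hj⟩ : Fin p)]
  · rw [dif_pos (by simpa using j.2)]
    rw [if_pos (by simp [Fin.ext_iff])]
    ring
  · intro a _ ha
    by_cases h : (a : ℕ) < n
    · rw [dif_pos h, if_neg (by simp only [Fin.ext_iff]; intro hc; exact ha (Fin.ext hc))]
      ring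
    · rw [dif_neg h]
  · intro hb; exact absurd (Finset.mem_univ _) hb

lemma svd_tmulVec_col {p n : ℕ} {A : Matrix (Fin p) (Fin n) ℝ} (Dd : SVDData p n A)
    (l : Fin p) :
    Aᵀ.mulVec (fun k => Dd.U k l) = fun j : Fin n =>
      if h : (l : ℕ) < n then Dd.sv (l : ℕ) * Dd.V j ⟨(l : ℕ), h⟩ else 0 := by
  classical
  funext j
  show (∑ x : Fin p, Aᵀ j x * Dd.U x l) = _
  have h0 : ∀ x : Fin p, Aᵀ j x * Dd.U x l = A x j * Dd.U x l := fun x => rfl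
  rw [Finset.sum_congr rfl fun x _ => h0 x]
  have h1 : ∀ x : Fin p, A x j * Dd.U x l = ∑ a : Fin p,
      (if h : (a : ℕ) < n then Dd.sv a * Dd.V j ⟨(a : ℕ), h⟩ * (Dd.U x a * Dd.U x l) else 0) := by
    intro x
    rw [svd_entry Dd x j, Finset.sum_mul]
    refine Finset.sum_congr rfl fun a _ => ?_
    by_cases h : (a : ℕ) < n
    · simp only [dif_pos h]; ring
    · simp only [dif_neg h, zero_mul]
  rw [Finset.sum_congr rfl fun x _ => h1 x, Finset.sum_comm]
  have h2 : ∀ a : Fin p, (∑ x : Fin p,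
      if h : (a : ℕ) < n then Dd.sv a * Dd.V j ⟨(a : ℕ), h⟩ * (Dd.U x a * Dd.U x l) else 0)
      = if h : (a : ℕ) < n then
          Dd.sv a * Dd.V j ⟨(a : ℕ), h⟩ * (if a = l then 1 else 0) else 0 := by
    intro a
    by_cases h : (a : ℕ) < n
    · simp only [dif_pos h]
      rw [← Finset.mul_sum, sum_col_mul_col Dd.hU]
    · simp only [dif_neg h, Finset.sum_const_zero]
  rw [Finset.sum_congr rfl fun a _ => h2 a]
  rw [Finset.sum_eq_single l]
  · by_cases h : (l : ℕ) < n
    · rw [dif_pos h, dif_pos h, if_pos rfl]; ring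
    · rw [dif_neg h, dif_neg h]
  · intro a _ ha
    by_cases h : (a : ℕ) < n
    · rw [dif_pos h, if_neg ha]; ring
    · rw [dif_neg h]
  · intro hb; exact absurd (Finset.mem_univ _) hb

lemma svd_norm_expansion {p n : ℕ} {A : Matrix (Fin p) (Fin n) ℝ} (Dd : SVDData p n A)
    (x : Fin p → ℝ) :
    dot (Aᵀ.mulVec x) (Aᵀ.mulVec x)
      = ∑ l : Fin p, (Dd.sv l) ^ 2 * (dot (fun i => Dd.U i l) x) ^ 2 := by
  classical
  set c : Fin p → ℝ :=
    fun a => if (a : ℕ) < n then Dd.sv a * dot (fun i => Dd.U i a) x else 0 with hc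
  set h : Fin p → Fin n → ℝ :=
    fun a j => if ha : (a : ℕ) < n then Dd.V j ⟨(a : ℕ), ha⟩ else 0 with hh
  have key : Aᵀ.mulVec x = fun j => ∑ a, c a * h a j := by
    funext j
    show (∑ i : Fin p, Aᵀ j i * x i) = _
    have h0 : ∀ i : Fin p, Aᵀ j i * x i = A i j * x i := fun i => rfl
    rw [Finset.sum_congr rfl fun i _ => h0 i]
    have h1 : ∀ i : Fin p, A i j * x i = ∑ a : Fin p,
        (if ha : (a : ℕ) < n then Dd.U i a * Dd.sv a * Dd.V j ⟨(a : ℕ), ha⟩ * x i else 0) := by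
      intro i
      rw [svd_entry Dd i j, Finset.sum_mul]
      refine Finset.sum_congr rfl fun a _ => ?_
      by_cases ha : (a : ℕ) < n
      · simp only [dif_pos ha]
      · simp only [dif_neg ha, zero_mul]
    rw [Finset.sum_congr rfl fun i _ => h1 i, Finset.sum_comm]
    refine Finset.sum_congr rfl fun a _ => ?_
    by_cases ha : (a : ℕ) < n
    · simp only [dif_pos ha]
      have e : ∀ i : Fin p, Dd.U i a * Dd.sv a * Dd.V j ⟨(a : ℕ), ha⟩ * x i
          = (Dd.sv a * Dd.V j ⟨(a : ℕ), ha⟩) * (Dd.U i a * x i) := fun i => by ring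
      rw [Finset.sum_congr rfl fun i _ => e i, ← Finset.mul_sum]
      simp only [hc, hh, if_pos ha, dif_pos ha, dot]
      ring
    · simp only [dif_neg ha, hc, hh, if_neg ha, dif_neg ha, Finset.sum_const_zero, zero_mul]
  rw [key, dot_sum_sum]
  refine Finset.sum_congr rfl fun a _ => ?_
  rw [Finset.sum_eq_single a]
  · by_cases ha : (a : ℕ) < n
    · have hd : dot (h a) (h a) = 1 := by
        simp only [hh, dif_pos ha]
        rw [cols_orthonormal Dd.hV, if_pos rfl]
      rw [hd]
      simp only [hc, if_pos ha]
      ring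
    · have : Dd.sv (a : ℕ) = 0 := Dd.sv_zero a (le_trans (min_le_right p n) (not_lt.mp ha))
      simp [hc, if_neg ha, this]
  · intro b _ hb
    by_cases ha : (a : ℕ) < n
    · by_cases hb' : (b : ℕ) < n
      · have hd : dot (h a) (h b) = 0 := by
          simp only [hh, dif_pos ha, dif_pos hb']
          rw [cols_orthonormal Dd.hV, if_neg (by simp only [Fin.ext_iff]; intro hc2; exact hb (Fin.ext hc2.symm))]
        rw [hd]; ring
      · have hd : c b = 0 := by simp [hc, hb']
        rw [hd]; ring
    · have hd : c a = 0 := by simp [hc, ha]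
      rw [hd]; ring
  · intro hb; exact absurd (Finset.mem_univ _) hb

lemma dot_sum_left {m q1 : ℕ} (α : Fin q1 → ℝ) (f : Fin q1 → Fin m → ℝ) (z : Fin m → ℝ) :
    dot (fun i => ∑ a, α a * f a i) z = ∑ a, α a * dot (f a) z := by
  show (∑ i, (∑ a, α a * f a i) * z i) = ∑ a, α a * ∑ i, f a i * z i
  calc ∑ i, (∑ a, α a * f a i) * z i = ∑ i, ∑ a, α a * f a i * z i :=
        Finset.sum_congr rfl fun i _ => Finset.sum_mul _ _ _
    _ = ∑ a, ∑ i, α a * f a i * z i := Finset.sum_comm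
    _ = ∑ a, α a * ∑ i, f a i * z i := by
        refine Finset.sum_congr rfl fun a _ => ?_
        rw [Finset.mul_sum]
        exact Finset.sum_congr rfl fun i _ => by ring

lemma mulVec_lincomb {a b q : ℕ} (A : Matrix (Fin a) (Fin b) ℝ) (α : Fin q → ℝ)
    (f : Fin q → Fin b → ℝ) :
    A.mulVec (fun i => ∑ k, α k * f k i) = fun j => ∑ k, α k * A.mulVec (f k) j := by
  funext j
  show (∑ i, A j i * ∑ k, α k * f k i) = ∑ k, α k * ∑ i, A j i * f k i
  calc ∑ i, A j i * ∑ k, α k * f k i = ∑ i, ∑ k, A j i * (α k * f k i) :=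
        Finset.sum_congr rfl fun i _ => Finset.mul_sum _ _ _
    _ = ∑ k, ∑ i, A j i * (α k * f k i) := Finset.sum_comm
    _ = ∑ k, α k * ∑ i, A j i * f k i := by
        refine Finset.sum_congr rfl fun k _ => ?_
        rw [Finset.mul_sum]
        exact Finset.sum_congr rfl fun i _ => by ring

section Construction

variable {p n : ℕ} {Y : Matrix (Fin p) (Fin n) ℝ}

/-- the columns of `D.U` as vectors -/
def uuC (D : SVDData p n Y) : Fin p → Fin p → ℝ := fun l i => D.U i l

lemma uuC_on (D : SVDData p n Y) (a b : Fin p) :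
    dot (uuC D a) (uuC D b) = if a = b then 1 else 0 := cols_orthonormal D.hU a b

/-- projection of `y` onto the span of the first `r` columns -/
def Pyv (D : SVDData p n Y) (y : Fin p → ℝ) (r : ℕ) : Fin p → ℝ := (projr D.U r).mulVec y

/-- coefficients of `y` on the first `r` columns -/
def cC (D : SVDData p n Y) (y : Fin p → ℝ) {r : ℕ} (hrp : r ≤ p) : Fin r → ℝ :=
  fun k => dot (uuC D (Fin.castLE hrp k)) y

lemma Pyv_eq (D : SVDData p n Y) (y : Fin p → ℝ) {r : ℕ} (hrp : r ≤ p) :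
    Pyv D y r = fun i => ∑ k : Fin r, cC D y hrp k * uuC D (Fin.castLE hrp k) i := by
  funext i
  show (∑ x, projr D.U r i x * y x) = _
  have h1 : ∀ x, projr D.U r i x * y x
      = ∑ l : Fin p, (if (l : ℕ) < r then D.U i l * D.U x l * y x else 0) := by
    intro x
    show (∑ l : Fin p, if (l : ℕ) < r then D.U i l * D.U x l else 0) * y x = _
    rw [Finset.sum_mul]
    refine Finset.sum_congr rfl fun l _ => ?_
    by_cases h : (l : ℕ) < r <;> simp [h]
  rw [Finset.sum_congr rfl fun x _ => h1 x, Finset.sum_comm]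
  have h2 : ∀ l : Fin p, (∑ x, if (l : ℕ) < r then D.U i l * D.U x l * y x else 0)
      = if (l : ℕ) < r then dot (uuC D l) y * D.U i l else 0 := by
    intro l
    by_cases h : (l : ℕ) < r
    · simp only [if_pos h]
      have e : ∀ x, D.U i l * D.U x l * y x = D.U x l * y x * D.U i l := fun x => by ring
      rw [Finset.sum_congr rfl fun x _ => e x, ← Finset.sum_mul]
      rfl
    · simp [h]
  rw [Finset.sum_congr rfl fun l _ => h2 l, sum_ite_lt hrp]
  rfl

lemma dot_Pyv_uu (D : SVDData p n Y) (y : Fin p → ℝ) {r : ℕ} (hrp : r ≤ p) (l : Fin p) :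
    dot (Pyv D y r) (uuC D l)
      = if h : (l : ℕ) < r then cC D y hrp ⟨(l : ℕ), h⟩ else 0 := by
  rw [Pyv_eq D y hrp, dot_sum_left]
  by_cases h : (l : ℕ) < r
  · rw [dif_pos h, Finset.sum_eq_single (⟨(l : ℕ), h⟩ : Fin r)]
    · rw [uuC_on, if_pos (Fin.ext (by simp))]
      ring
    · intro k _ hk
      have hne : Fin.castLE hrp k ≠ l := by
        intro hc
        apply hk
        apply Fin.ext
        simpa using congrArg Fin.val hc
      rw [uuC_on, if_neg hne]
      ring
    · intro hb; exact absurd (Finset.mem_univ _) hb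
  · rw [dif_neg h]
    refine Finset.sum_eq_zero fun k _ => ?_
    have hne : Fin.castLE hrp k ≠ l := by
      intro hc
      have h2 := congrArg Fin.val hc
      simp only [Fin.coe_castLE] at h2
      omega
    rw [uuC_on, if_neg hne]
    ring

/-- the matrix `B = (Y, P y)` -/
def Bmat (D : SVDData p n Y) (y : Fin p → ℝ) (r : ℕ) : Matrix (Fin p) (Fin (n + 1)) ℝ :=
  Matrix.of fun i j => if h : (j : ℕ) < n then Y i ⟨(j : ℕ), h⟩ else Pyv D y r i

lemma Bt_mulVec (D : SVDData p n Y) (y : Fin p → ℝ) (r : ℕ) (x : Fin p → ℝ) (k : Fin (n + 1)) :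
    (Bmat D y r)ᵀ.mulVec x k
      = if h : (k : ℕ) < n then Yᵀ.mulVec x ⟨(k : ℕ), h⟩ else dot (Pyv D y r) x := by
  show (∑ i, (Bmat D y r)ᵀ k i * x i) = _
  by_cases h : (k : ℕ) < n
  · rw [dif_pos h]
    show _ = ∑ i, Yᵀ ⟨(k : ℕ), h⟩ i * x i
    refine Finset.sum_congr rfl fun i _ => ?_
    show Bmat D y r i k * x i = Y i ⟨(k : ℕ), h⟩ * x i
    rw [show Bmat D y r i k = Y i ⟨(k : ℕ), h⟩ from dif_pos h]
  · rw [dif_neg h]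
    refine Finset.sum_congr rfl fun i _ => ?_
    show Bmat D y r i k * x i = Pyv D y r i * x i
    rw [show Bmat D y r i k = Pyv D y r i from dif_neg h]

lemma B_mulVec (D : SVDData p n Y) (y : Fin p → ℝ) (r : ℕ) (z : Fin (n + 1) → ℝ) (i : Fin p) :
    (Bmat D y r).mulVec z i
      = (∑ j : Fin n, Y i j * z (Fin.castSucc j)) + Pyv D y r i * z (Fin.last n) := by
  show (∑ k : Fin (n + 1), Bmat D y r i k * z k) = _
  rw [Fin.sum_univ_castSucc]
  congr 1
  · refine Finset.sum_congr rfl fun j _ => ?_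
    have hj : ((Fin.castSucc j : Fin (n + 1)) : ℕ) < n := by simpa using j.2
    have : Bmat D y r i (Fin.castSucc j) = Y i ⟨((Fin.castSucc j : Fin (n + 1)) : ℕ), hj⟩ :=
      dif_pos hj
    rw [this]
    rw [show (⟨((Fin.castSucc j : Fin (n + 1)) : ℕ), hj⟩ : Fin n) = j from Fin.ext (by simp)]
  · have : Bmat D y r i (Fin.last n) = Pyv D y r i := dif_neg (by simp)
    rw [this]

end Construction

lemma dot_mul_left {m : ℕ} (c : ℝ) (z w : Fin m → ℝ) :
    dot (fun i => c * z i) w = c * dot z w := by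
  show (∑ i, c * z i * w i) = c * ∑ i, z i * w i
  rw [Finset.mul_sum]
  exact Finset.sum_congr rfl fun i _ => by ring

lemma dot_mul_right {m : ℕ} (c : ℝ) (z w : Fin m → ℝ) :
    dot z (fun i => c * w i) = c * dot z w := by
  rw [dot_comm, dot_mul_left, dot_comm]

lemma rows_orthonormal {m : ℕ} (f : Fin m → Fin m → ℝ)
    (h : ∀ j k, dot (f j) (f k) = if j = k then 1 else 0) (x y : Fin m) :
    (∑ j, f j x * f j y) = if x = y then 1 else 0 := by
  classical
  let F : Matrix (Fin m) (Fin m) ℝ := Matrix.of fun j i => f j i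
  have hFFt : F * Fᵀ = 1 := by
    ext j k
    simpa [F, Matrix.mul_apply, Matrix.one_apply, dot] using h j k
  have hFtF : Fᵀ * F = 1 := mul_eq_one_comm.mp hFFt
  have := congrFun (congrFun hFtF x) y
  simpa [F, Matrix.mul_apply, Matrix.one_apply] using this

section Construction2

variable {p n : ℕ} {Y : Matrix (Fin p) (Fin n) ℝ}

/-- the `r × r` matrix `Σ_r² + c cᵀ`. -/
def MC (D : SVDData p n Y) (y : Fin p → ℝ) {r : ℕ} (hrp : r ≤ p) : Matrix (Fin r) (Fin r) ℝ :=
  Matrix.of fun a b =>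
    (if a = b then (D.sv (a : ℕ)) ^ 2 else 0) + cC D y hrp a * cC D y hrp b

lemma MC_herm (D : SVDData p n Y) (y : Fin p → ℝ) {r : ℕ} (hrp : r ≤ p) :
    (MC D y hrp).IsHermitian := by
  show (MC D y hrp)ᴴ = MC D y hrp
  ext a b
  simp only [Matrix.conjTranspose_apply, MC, Matrix.of_apply, star_trivial]
  by_cases hab : a = b
  · subst hab; ring
  · rw [if_neg hab, if_neg (Ne.symm hab)]; ring

/-- orthonormal eigenvectors of `MC` -/
def qC (D : SVDData p n Y) (y : Fin p → ℝ) {r : ℕ} (hrp : r ≤ p) : Fin r → Fin r → ℝ :=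
  fun j => ((MC_herm D y hrp).eigenvectorBasis j : EuclideanSpace ℝ (Fin r))

/-- eigenvalues of `MC` -/
def muC (D : SVDData p n Y) (y : Fin p → ℝ) {r : ℕ} (hrp : r ≤ p) : Fin r → ℝ :=
  (MC_herm D y hrp).eigenvalues

lemma qC_on (D : SVDData p n Y) (y : Fin p → ℝ) {r : ℕ} (hrp : r ≤ p) (j k : Fin r) :
    dot (qC D y hrp j) (qC D y hrp k) = if j = k then 1 else 0 := by
  have h := orthonormal_iff_ite.mp (MC_herm D y hrp).eigenvectorBasis.orthonormal j k
  rw [PiLp.inner_apply] at h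
  simpa [dot, qC, RCLike.inner_apply, starRingEnd_apply, mul_comm] using h

lemma qC_eigen (D : SVDData p n Y) (y : Fin p → ℝ) {r : ℕ} (hrp : r ≤ p) (j : Fin r) :
    (MC D y hrp).mulVec (qC D y hrp j) = fun k => muC D y hrp j * qC D y hrp j k := by
  have h := (MC_herm D y hrp).mulVec_eigenvectorBasis j
  funext k
  have h2 := congrFun h k
  simpa [qC, muC] using h2

lemma MC_mulVec (D : SVDData p n Y) (y : Fin p → ℝ) {r : ℕ} (hrp : r ≤ p)
    (q : Fin r → ℝ) (a : Fin r) :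
    (MC D y hrp).mulVec q a
      = (D.sv (a : ℕ)) ^ 2 * q a + cC D y hrp a * (∑ b, cC D y hrp b * q b) := by
  show (∑ b, MC D y hrp a b * q b) = _
  have h1 : ∀ b, MC D y hrp a b * q b
      = (if a = b then (D.sv (a : ℕ)) ^ 2 else 0) * q b + cC D y hrp a * (cC D y hrp b * q b) := by
    intro b
    show ((if a = b then (D.sv (a : ℕ)) ^ 2 else 0) + cC D y hrp a * cC D y hrp b) * q b = _
    ring
  rw [Finset.sum_congr rfl fun b _ => h1 b, Finset.sum_add_distrib, ← Finset.mul_sum]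
  congr 1
  rw [Finset.sum_eq_single a]
  · rw [if_pos rfl]
  · intro b _ hb; rw [if_neg (Ne.symm hb), zero_mul]
  · intro hb; exact absurd (Finset.mem_univ _) hb

lemma muC_nonneg (D : SVDData p n Y) (y : Fin p → ℝ) {r : ℕ} (hrp : r ≤ p) (j : Fin r) :
    0 ≤ muC D y hrp j := by
  have e1 : dot (qC D y hrp j) ((MC D y hrp).mulVec (qC D y hrp j)) = muC D y hrp j := by
    rw [qC_eigen, dot_mul_right, qC_on, if_pos rfl, mul_one]
  have e2 : dot (qC D y hrp j) ((MC D y hrp).mulVec (qC D y hrp j))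
      = (∑ a : Fin r, (D.sv (a : ℕ)) ^ 2 * (qC D y hrp j a) ^ 2)
        + (∑ b : Fin r, cC D y hrp b * qC D y hrp j b)
          * (∑ b : Fin r, cC D y hrp b * qC D y hrp j b) := by
    show (∑ a, qC D y hrp j a * (MC D y hrp).mulVec (qC D y hrp j) a) = _
    have h1 : ∀ a, qC D y hrp j a * (MC D y hrp).mulVec (qC D y hrp j) a
        = (D.sv (a : ℕ)) ^ 2 * (qC D y hrp j a) ^ 2
          + (cC D y hrp a * qC D y hrp j a) * (∑ b, cC D y hrp b * qC D y hrp j b) := by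
      intro a
      rw [MC_mulVec]
      ring
    rw [Finset.sum_congr rfl fun a _ => h1 a, Finset.sum_add_distrib, ← Finset.sum_mul]
  rw [← e1, e2]
  have h5 : 0 ≤ ∑ a : Fin r, (D.sv (a : ℕ)) ^ 2 * (qC D y hrp j a) ^ 2 :=
    Finset.sum_nonneg fun a _ => mul_nonneg (sq_nonneg _) (sq_nonneg _)
  nlinarith [mul_self_nonneg (∑ b : Fin r, cC D y hrp b * qC D y hrp j b)]

/-- left singular system for `B`: first `r` rotated by eigenvectors of `MC`. -/
def u'C (D : SVDData p n Y) (y : Fin p → ℝ) {r : ℕ} (hrp : r ≤ p) : Fin p → Fin p → ℝ :=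
  fun j => if h : (j : ℕ) < r then
    (fun i => ∑ k : Fin r, qC D y hrp ⟨(j : ℕ), h⟩ k * uuC D (Fin.castLE hrp k) i)
  else uuC D j

/-- singular values for `B` -/
def sC (D : SVDData p n Y) (y : Fin p → ℝ) {r : ℕ} (hrp : r ≤ p) : Fin p → ℝ :=
  fun j => if h : (j : ℕ) < r then Real.sqrt (muC D y hrp ⟨(j : ℕ), h⟩) else D.sv (j : ℕ)

/-- right singular system for `B` -/
def v'C (D : SVDData p n Y) (y : Fin p → ℝ) {r : ℕ} (hrp : r ≤ p) : Fin p → Fin (n + 1) → ℝ :=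
  fun j => if h : (j : ℕ) < r then
    (if Real.sqrt (muC D y hrp ⟨(j : ℕ), h⟩) = 0 then (fun _ => 0)
     else fun k => (Real.sqrt (muC D y hrp ⟨(j : ℕ), h⟩))⁻¹
        * (Bmat D y r)ᵀ.mulVec (u'C D y hrp j) k)
  else fun k => if h2 : (k : ℕ) < n ∧ (j : ℕ) < n then D.V ⟨(k : ℕ), h2.1⟩ ⟨(j : ℕ), h2.2⟩ else 0

lemma u'C_on (D : SVDData p n Y) (y : Fin p → ℝ) {r : ℕ} (hrp : r ≤ p) (j k : Fin p) :
    dot (u'C D y hrp j) (u'C D y hrp k) = if j = k then 1 else 0 := by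
  classical
  have key : ∀ j k : Fin p, (j : ℕ) < r → ¬ ((k : ℕ) < r) →
      dot (u'C D y hrp j) (u'C D y hrp k) = 0 := by
    intro j k hj hk
    simp only [u'C, dif_pos hj, dif_neg hk]
    rw [dot_sum_left]
    refine Finset.sum_eq_zero fun a _ => ?_
    rw [uuC_on, if_neg (by intro hc; have := congrArg Fin.val hc; simp only [Fin.coe_castLE] at this; omega)]
    ring
  by_cases hj : (j : ℕ) < r <;> by_cases hk : (k : ℕ) < r
  · simp only [u'C, dif_pos hj, dif_pos hk]
    rw [dot_sum_sum]
    have h1 : ∀ a : Fin r, ∀ b : Fin r,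
        qC D y hrp ⟨(j : ℕ), hj⟩ a * qC D y hrp ⟨(k : ℕ), hk⟩ b
            * dot (uuC D (Fin.castLE hrp a)) (uuC D (Fin.castLE hrp b))
        = qC D y hrp ⟨(j : ℕ), hj⟩ a * qC D y hrp ⟨(k : ℕ), hk⟩ b * (if a = b then 1 else 0) := by
      intro a b
      rw [uuC_on]
      congr 1
      by_cases hab : a = b
      · rw [if_pos hab, if_pos (by rw [hab])]
      · rw [if_neg hab, if_neg (by intro hc; exact hab (Fin.ext (by simpa using congrArg Fin.val hc)))]
    rw [Finset.sum_congr rfl fun a _ => Finset.sum_congr rfl fun b _ => h1 a b]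
    have h2 : ∀ a : Fin r, (∑ b : Fin r, qC D y hrp ⟨(j : ℕ), hj⟩ a * qC D y hrp ⟨(k : ℕ), hk⟩ b
        * (if a = b then 1 else 0)) = qC D y hrp ⟨(j : ℕ), hj⟩ a * qC D y hrp ⟨(k : ℕ), hk⟩ a := by
      intro a
      rw [Finset.sum_eq_single a]
      · rw [if_pos rfl]; ring
      · intro b _ hb; rw [if_neg (Ne.symm hb)]; ring
      · intro hb; exact absurd (Finset.mem_univ _) hb
    rw [Finset.sum_congr rfl fun a _ => h2 a]
    have h4 : (∑ a, qC D y hrp ⟨(j : ℕ), hj⟩ a * qC D y hrp ⟨(k : ℕ), hk⟩ a)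
        = if (⟨(j : ℕ), hj⟩ : Fin r) = ⟨(k : ℕ), hk⟩ then (1:ℝ) else 0 :=
      qC_on D y hrp ⟨(j : ℕ), hj⟩ ⟨(k : ℕ), hk⟩
    rw [h4]
    by_cases hjk : j = k
    · rw [if_pos hjk, if_pos (Fin.ext (by simp [hjk]))]
    · rw [if_neg hjk, if_neg (by intro hc; exact hjk (Fin.ext (by simpa using congrArg Fin.val hc)))]
  · rw [key j k hj hk, if_neg (by intro hc; subst hc; exact hk hj)]
  · rw [dot_comm, key k j hk hj, if_neg (by intro hc; subst hc; exact hj hk)]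
  · simp only [u'C, dif_neg hj, dif_neg hk]
    rw [uuC_on]

lemma sC_nonneg (D : SVDData p n Y) (y : Fin p → ℝ) {r : ℕ} (hrp : r ≤ p) (j : Fin p) :
    0 ≤ sC D y hrp j := by
  unfold sC
  by_cases h : (j : ℕ) < r
  · rw [dif_pos h]; exact Real.sqrt_nonneg _
  · rw [dif_neg h]; exact D.sv_nonneg _

lemma sC_le (D : SVDData p n Y) (y : Fin p → ℝ) {r : ℕ} (hrp : r ≤ p) (j : Fin p)
    (hj : r ≤ (j : ℕ)) : sC D y hrp j ≤ D.sv r := by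
  unfold sC
  rw [dif_neg (by omega)]
  exact D.sv_anti r _ hj

end Construction2

lemma mulVec_scalar {a b : ℕ} (A : Matrix (Fin a) (Fin b) ℝ) (c : ℝ) (z : Fin b → ℝ) :
    A.mulVec (fun k => c * z k) = fun i => c * A.mulVec z i := by
  funext i
  show (∑ k, A i k * (c * z k)) = c * ∑ k, A i k * z k
  rw [Finset.mul_sum]
  exact Finset.sum_congr rfl fun k _ => by ring

section Construction3

variable {p n : ℕ} {Y : Matrix (Fin p) (Fin n) ℝ}

lemma BBt_uu_low (D : SVDData p n Y) (y : Fin p → ℝ) {r : ℕ} (hrp : r ≤ p) (hrn : r ≤ n)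
    (l : Fin p) (hl : (l : ℕ) < r) :
    (Bmat D y r).mulVec ((Bmat D y r)ᵀ.mulVec (uuC D l))
      = fun i => (D.sv (l : ℕ)) ^ 2 * uuC D l i + cC D y hrp ⟨(l : ℕ), hl⟩ * Pyv D y r i := by
  have hln : (l : ℕ) < n := lt_of_lt_of_le hl hrn
  funext i
  rw [B_mulVec]
  have hlast : (Bmat D y r)ᵀ.mulVec (uuC D l) (Fin.last n) = cC D y hrp ⟨(l : ℕ), hl⟩ := by
    rw [Bt_mulVec, dif_neg (by simp), dot_Pyv_uu D y hrp, dif_pos hl]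
  have hcast : ∀ jj : Fin n, (Bmat D y r)ᵀ.mulVec (uuC D l) (Fin.castSucc jj)
      = D.sv (l : ℕ) * D.V jj ⟨(l : ℕ), hln⟩ := by
    intro jj
    have hjj : ((Fin.castSucc jj : Fin (n + 1)) : ℕ) < n := by simpa using jj.2
    rw [Bt_mulVec, dif_pos hjj]
    have h2 := congrFun (svd_tmulVec_col D l) (⟨((Fin.castSucc jj : Fin (n + 1)) : ℕ), hjj⟩ : Fin n)
    have h3 : Yᵀ.mulVec (uuC D l) (⟨((Fin.castSucc jj : Fin (n + 1)) : ℕ), hjj⟩ : Fin n)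
        = if h : (l : ℕ) < n then
            D.sv (l : ℕ) * D.V (⟨((Fin.castSucc jj : Fin (n + 1)) : ℕ), hjj⟩ : Fin n) ⟨(l : ℕ), h⟩
          else 0 := h2
    rw [h3, dif_pos hln]
    have hmk : (⟨((Fin.castSucc jj : Fin (n + 1)) : ℕ), hjj⟩ : Fin n) = jj := Fin.ext (by simp)
    rw [hmk]
  rw [hlast, Finset.sum_congr rfl fun jj (_ : jj ∈ Finset.univ) => by rw [hcast jj]]
  have hsum : (∑ jj : Fin n, Y i jj * (D.sv (l : ℕ) * D.V jj ⟨(l : ℕ), hln⟩))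
      = D.sv (l : ℕ) * ∑ jj : Fin n, Y i jj * D.V jj ⟨(l : ℕ), hln⟩ := by
    rw [Finset.mul_sum]
    exact Finset.sum_congr rfl fun jj _ => by ring
  rw [hsum]
  have hY2 : (∑ jj : Fin n, Y i jj * D.V jj ⟨(l : ℕ), hln⟩) = D.sv (l : ℕ) * D.U i l := by
    have h := congrFun (svd_mulVec_col D ⟨(l : ℕ), hln⟩
      (show ((⟨(l : ℕ), hln⟩ : Fin n) : ℕ) < p from l.2)) i
    have h2 : Y.mulVec (fun k => D.V k ⟨(l : ℕ), hln⟩) i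
        = ∑ jj, Y i jj * D.V jj ⟨(l : ℕ), hln⟩ := rfl
    rw [h2] at h
    rw [h]
  rw [hY2]
  show D.sv (l : ℕ) * (D.sv (l : ℕ) * D.U i l) + Pyv D y r i * cC D y hrp ⟨(l : ℕ), hl⟩
      = (D.sv (l : ℕ)) ^ 2 * D.U i l + cC D y hrp ⟨(l : ℕ), hl⟩ * Pyv D y r i
  ring

lemma BBt_u'_low (D : SVDData p n Y) (y : Fin p → ℝ) {r : ℕ} (hrp : r ≤ p) (hrn : r ≤ n)
    (j : Fin p) (hj : (j : ℕ) < r) :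
    (Bmat D y r).mulVec ((Bmat D y r)ᵀ.mulVec (u'C D y hrp j))
      = fun i => muC D y hrp ⟨(j : ℕ), hj⟩ * u'C D y hrp j i := by
  have hu' : u'C D y hrp j
      = fun i => ∑ k : Fin r, qC D y hrp ⟨(j : ℕ), hj⟩ k * uuC D (Fin.castLE hrp k) i :=
    dif_pos hj
  rw [hu', mulVec_lincomb, mulVec_lincomb]
  funext i
  have hk1 : ∀ k : Fin r, (Bmat D y r).mulVec ((Bmat D y r)ᵀ.mulVec (uuC D (Fin.castLE hrp k))) i
      = (D.sv (k : ℕ)) ^ 2 * uuC D (Fin.castLE hrp k) i + cC D y hrp k * Pyv D y r i := by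
    intro k
    have hlt : ((Fin.castLE hrp k : Fin p) : ℕ) < r := by simpa using k.2
    have h := congrFun (BBt_uu_low D y hrp hrn (Fin.castLE hrp k) hlt) i
    rw [h]
    have hmk : (⟨((Fin.castLE hrp k : Fin p) : ℕ), hlt⟩ : Fin r) = k := Fin.ext (by simp)
    rw [hmk]
    rfl
  rw [Finset.sum_congr rfl fun k (_ : k ∈ Finset.univ) => by rw [hk1 k]]
  have expand : (∑ k : Fin r, qC D y hrp ⟨(j : ℕ), hj⟩ k
      * ((D.sv (k : ℕ)) ^ 2 * uuC D (Fin.castLE hrp k) i + cC D y hrp k * Pyv D y r i))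
      = (∑ k : Fin r, ((D.sv (k : ℕ)) ^ 2 * qC D y hrp ⟨(j : ℕ), hj⟩ k
            + cC D y hrp k * (∑ b : Fin r, cC D y hrp b * qC D y hrp ⟨(j : ℕ), hj⟩ b))
          * uuC D (Fin.castLE hrp k) i) := by
    calc (∑ k : Fin r, qC D y hrp ⟨(j : ℕ), hj⟩ k
        * ((D.sv (k : ℕ)) ^ 2 * uuC D (Fin.castLE hrp k) i + cC D y hrp k * Pyv D y r i))
        = (∑ k : Fin r, (D.sv (k : ℕ)) ^ 2 * qC D y hrp ⟨(j : ℕ), hj⟩ k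
            * uuC D (Fin.castLE hrp k) i)
          + ∑ k : Fin r, cC D y hrp k * qC D y hrp ⟨(j : ℕ), hj⟩ k * Pyv D y r i := by
          rw [← Finset.sum_add_distrib]
          exact Finset.sum_congr rfl fun k _ => by ring
      _ = (∑ k : Fin r, (D.sv (k : ℕ)) ^ 2 * qC D y hrp ⟨(j : ℕ), hj⟩ k
            * uuC D (Fin.castLE hrp k) i)
          + (∑ k : Fin r, cC D y hrp k * qC D y hrp ⟨(j : ℕ), hj⟩ k) * Pyv D y r i := by
          rw [Finset.sum_mul]
      _ = (∑ k : Fin r, (D.sv (k : ℕ)) ^ 2 * qC D y hrp ⟨(j : ℕ), hj⟩ k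
            * uuC D (Fin.castLE hrp k) i)
          + (∑ k : Fin r, cC D y hrp k * qC D y hrp ⟨(j : ℕ), hj⟩ k)
            * (∑ b : Fin r, cC D y hrp b * uuC D (Fin.castLE hrp b) i) := by
          have hP : Pyv D y r i = ∑ b : Fin r, cC D y hrp b * uuC D (Fin.castLE hrp b) i :=
            congrFun (Pyv_eq D y hrp) i
          rw [hP]
      _ = _ := by
          rw [Finset.mul_sum, ← Finset.sum_add_distrib]
          refine Finset.sum_congr rfl fun k _ => by ring
  rw [expand]
  have heig : ∀ k : Fin r, (D.sv (k : ℕ)) ^ 2 * qC D y hrp ⟨(j : ℕ), hj⟩ k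
      + cC D y hrp k * (∑ b : Fin r, cC D y hrp b * qC D y hrp ⟨(j : ℕ), hj⟩ b)
      = muC D y hrp ⟨(j : ℕ), hj⟩ * qC D y hrp ⟨(j : ℕ), hj⟩ k := by
    intro k
    have h1 := congrFun (qC_eigen D y hrp ⟨(j : ℕ), hj⟩) k
    have h2 := MC_mulVec D y hrp (qC D y hrp ⟨(j : ℕ), hj⟩) k
    rw [h2] at h1
    exact h1
  conv_rhs => rw [Finset.mul_sum]
  refine Finset.sum_congr rfl fun k _ => ?_
  rw [heig k]
  ring

lemma Bt_u'_norm (D : SVDData p n Y) (y : Fin p → ℝ) {r : ℕ} (hrp : r ≤ p) (hrn : r ≤ n)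
    (j : Fin p) (hj : (j : ℕ) < r) :
    dot ((Bmat D y r)ᵀ.mulVec (u'C D y hrp j)) ((Bmat D y r)ᵀ.mulVec (u'C D y hrp j))
      = muC D y hrp ⟨(j : ℕ), hj⟩ := by
  have h := dot_mulVec (Bmat D y r) (u'C D y hrp j) ((Bmat D y r)ᵀ.mulVec (u'C D y hrp j))
  rw [← h, BBt_u'_low D y hrp hrn j hj, dot_mul_right, u'C_on, if_pos rfl, mul_one]

/-- unified: `Bᵀ u'_j = s_j v'_j` for every `j`. -/
lemma Bt_u' (D : SVDData p n Y) (y : Fin p → ℝ) {r : ℕ} (hrp : r ≤ p) (hrn : r ≤ n)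
    (j : Fin p) :
    (Bmat D y r)ᵀ.mulVec (u'C D y hrp j) = fun k => sC D y hrp j * v'C D y hrp j k := by
  by_cases hj : (j : ℕ) < r
  · by_cases hs : Real.sqrt (muC D y hrp ⟨(j : ℕ), hj⟩) = 0
    · have hmu0 : muC D y hrp ⟨(j : ℕ), hj⟩ = 0 := by
        have h1 := muC_nonneg D y hrp ⟨(j : ℕ), hj⟩
        nlinarith [Real.sq_sqrt h1, hs]
      have hz : ∀ k, (Bmat D y r)ᵀ.mulVec (u'C D y hrp j) k = 0 := by
        apply eq_zero_of_dot_self_eq_zero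
        rw [Bt_u'_norm D y hrp hrn j hj, hmu0]
      funext k
      rw [hz k]
      simp only [v'C, dif_pos hj, if_pos hs, sC]
      ring
    · funext k
      simp only [v'C, dif_pos hj, if_neg hs, sC, dif_pos hj]
      rw [← mul_assoc, mul_inv_cancel₀ hs, one_mul]
  · funext k
    rw [Bt_mulVec]
    by_cases hk : (k : ℕ) < n
    · rw [dif_pos hk]
      have hu : u'C D y hrp j = uuC D j := dif_neg hj
      rw [hu]
      have h2 : Yᵀ.mulVec (uuC D j) (⟨(k : ℕ), hk⟩ : Fin n)
          = if h : (j : ℕ) < n then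
              D.sv (j : ℕ) * D.V (⟨(k : ℕ), hk⟩ : Fin n) ⟨(j : ℕ), h⟩ else 0 :=
        congrFun (svd_tmulVec_col D j) _
      rw [h2]
      simp only [v'C, dif_neg hj, sC, dif_neg hj]
      by_cases hjn : (j : ℕ) < n
      · rw [dif_pos hjn, dif_pos (show (k : ℕ) < n ∧ (j : ℕ) < n from ⟨hk, hjn⟩)]
      · rw [dif_neg hjn, dif_neg (show ¬((k : ℕ) < n ∧ (j : ℕ) < n) from fun hcon => hjn hcon.2)]
        ring
    · rw [dif_neg hk]
      have hu : u'C D y hrp j = uuC D j := dif_neg hj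
      rw [hu, dot_Pyv_uu D y hrp j, dif_neg hj]
      simp only [v'C, dif_neg hj, sC, dif_neg hj]
      rw [dif_neg (show ¬((k : ℕ) < n ∧ (j : ℕ) < n) from fun hcon => hk hcon.1)]
      ring

/-- unified: `B v'_j = s_j u'_j` for every `j`. -/
lemma B_v' (D : SVDData p n Y) (y : Fin p → ℝ) {r : ℕ} (hrp : r ≤ p) (hrn : r ≤ n)
    (j : Fin p) :
    (Bmat D y r).mulVec (v'C D y hrp j) = fun i => sC D y hrp j * u'C D y hrp j i := by
  by_cases hj : (j : ℕ) < r
  · by_cases hs : Real.sqrt (muC D y hrp ⟨(j : ℕ), hj⟩) = 0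
    · simp only [v'C, dif_pos hj, if_pos hs, sC, dif_pos hj, hs]
      funext i
      show (∑ k, Bmat D y r i k * 0) = 0 * u'C D y hrp j i
      simp
    · simp only [v'C, dif_pos hj, if_neg hs, sC, dif_pos hj]
      rw [mulVec_scalar, BBt_u'_low D y hrp hrn j hj]
      funext i
      have hmu : muC D y hrp ⟨(j : ℕ), hj⟩
          = Real.sqrt (muC D y hrp ⟨(j : ℕ), hj⟩) * Real.sqrt (muC D y hrp ⟨(j : ℕ), hj⟩) :=
        (Real.mul_self_sqrt (muC_nonneg D y hrp _)).symm
      rw [hmu]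
      field_simp
      ring_nf
      rw [Real.sqrt_sq (Real.sqrt_nonneg _)]
      ring
  · funext i
    rw [B_mulVec]
    have hlast : v'C D y hrp j (Fin.last n) = 0 := by
      simp only [v'C, dif_neg hj]
      rw [dif_neg (show ¬(((Fin.last n : Fin (n + 1)) : ℕ) < n ∧ (j : ℕ) < n) from
        fun hcon => by simp at hcon)]
    rw [hlast, mul_zero, add_zero]
    by_cases hjn : (j : ℕ) < n
    · have hcast : ∀ jj : Fin n, v'C D y hrp j (Fin.castSucc jj) = D.V jj ⟨(j : ℕ), hjn⟩ := by
        intro jj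
        have hjj : ((Fin.castSucc jj : Fin (n + 1)) : ℕ) < n := by simpa using jj.2
        simp only [v'C, dif_neg hj]
        rw [dif_pos (show ((Fin.castSucc jj : Fin (n + 1)) : ℕ) < n ∧ (j : ℕ) < n from ⟨hjj, hjn⟩)]
        have hmk : (⟨((Fin.castSucc jj : Fin (n + 1)) : ℕ), (show ((Fin.castSucc jj : Fin (n + 1)) : ℕ) < n ∧ (j : ℕ) < n from ⟨hjj, hjn⟩).1⟩ : Fin n) = jj := Fin.ext (by simp)
        rw [hmk]
      rw [Finset.sum_congr rfl fun jj (_ : jj ∈ Finset.univ) => by rw [hcast jj]]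
      have hY2 : (∑ jj : Fin n, Y i jj * D.V jj ⟨(j : ℕ), hjn⟩) = D.sv (j : ℕ) * D.U i j := by
        have h := congrFun (svd_mulVec_col D ⟨(j : ℕ), hjn⟩
          (show ((⟨(j : ℕ), hjn⟩ : Fin n) : ℕ) < p from j.2)) i
        have h2 : Y.mulVec (fun k => D.V k ⟨(j : ℕ), hjn⟩) i
            = ∑ jj, Y i jj * D.V jj ⟨(j : ℕ), hjn⟩ := rfl
        rw [h2] at h
        rw [h]
      rw [hY2]
      simp only [sC, dif_neg hj, u'C, dif_neg hj]
      rfl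
    · have hcast : ∀ jj : Fin n, v'C D y hrp j (Fin.castSucc jj) = 0 := by
        intro jj
        simp only [v'C, dif_neg hj]
        rw [dif_neg (show ¬(((Fin.castSucc jj : Fin (n + 1)) : ℕ) < n ∧ (j : ℕ) < n) from
          fun hcon => hjn hcon.2)]
      rw [Finset.sum_congr rfl fun jj (_ : jj ∈ Finset.univ) => by rw [hcast jj, mul_zero]]
      rw [Finset.sum_const_zero]
      have hsv : D.sv (j : ℕ) = 0 := D.sv_zero _ (le_trans (min_le_right p n) (not_lt.mp hjn))
      simp only [sC, dif_neg hj, hsv, u'C]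
      ring

end Construction3

section Construction4

variable {p n : ℕ} {Y : Matrix (Fin p) (Fin n) ℝ}

lemma v'_high_apply' (D : SVDData p n Y) (y : Fin p → ℝ) {r : ℕ} (hrp : r ≤ p)
    (j : Fin p) (hj : ¬ (j : ℕ) < r) (m : Fin (n + 1)) (hm : (m : ℕ) < n) (hjn : (j : ℕ) < n) :
    v'C D y hrp j m = D.V ⟨(m : ℕ), hm⟩ ⟨(j : ℕ), hjn⟩ := by
  simp only [v'C, dif_neg hj]
  rw [dif_pos (show (m : ℕ) < n ∧ (j : ℕ) < n from ⟨hm, hjn⟩)]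

lemma v'_high_apply_zero (D : SVDData p n Y) (y : Fin p → ℝ) {r : ℕ} (hrp : r ≤ p)
    (j : Fin p) (hj : ¬ (j : ℕ) < r) (m : Fin (n + 1)) (hmj : ¬ ((m : ℕ) < n ∧ (j : ℕ) < n)) :
    v'C D y hrp j m = 0 := by
  simp only [v'C, dif_neg hj]
  rw [dif_neg hmj]

lemma v'_dot_high (D : SVDData p n Y) (y : Fin p → ℝ) {r : ℕ} (hrp : r ≤ p)
    (j k : Fin p) (hj : ¬ (j : ℕ) < r) (hk : ¬ (k : ℕ) < r) :
    dot (v'C D y hrp j) (v'C D y hrp k)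
      = if h : (j : ℕ) < n ∧ (k : ℕ) < n then
          (if (⟨(j : ℕ), h.1⟩ : Fin n) = ⟨(k : ℕ), h.2⟩ then (1 : ℝ) else 0) else 0 := by
  show (∑ m : Fin (n + 1), v'C D y hrp j m * v'C D y hrp k m) = _
  rw [Fin.sum_univ_castSucc]
  have hlast : v'C D y hrp j (Fin.last n) * v'C D y hrp k (Fin.last n) = 0 := by
    rw [v'_high_apply_zero D y hrp j hj (Fin.last n) (fun hc => absurd hc.1 (by simp))]
    ring
  rw [hlast, add_zero]
  by_cases hcase : (j : ℕ) < n ∧ (k : ℕ) < n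
  · rw [dif_pos hcase]
    have hterm : ∀ m : Fin n,
        v'C D y hrp j (Fin.castSucc m) * v'C D y hrp k (Fin.castSucc m)
          = D.V (⟨((Fin.castSucc m : Fin (n + 1)) : ℕ), by simpa using m.2⟩ : Fin n) ⟨(j : ℕ), hcase.1⟩
            * D.V (⟨((Fin.castSucc m : Fin (n + 1)) : ℕ), by simpa using m.2⟩ : Fin n) ⟨(k : ℕ), hcase.2⟩ := by
      intro m
      rw [v'_high_apply' D y hrp j hj _ (by simpa using m.2) hcase.1,
          v'_high_apply' D y hrp k hk _ (by simpa using m.2) hcase.2]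
    rw [Finset.sum_congr rfl fun m (_ : m ∈ Finset.univ) => hterm m]
    have hre : ∀ m : Fin n,
        (⟨((Fin.castSucc m : Fin (n + 1)) : ℕ), by simpa using m.2⟩ : Fin n) = m :=
      fun m => Fin.ext (by simp)
    rw [Finset.sum_congr rfl fun m (_ : m ∈ Finset.univ) => by rw [hre m]]
    exact sum_col_mul_col D.hV _ _
  · rw [dif_neg hcase]
    rcases not_and_or.mp hcase with hjn | hkn
    · refine Finset.sum_eq_zero fun m _ => ?_
      rw [v'_high_apply_zero D y hrp j hj _ (fun hc => hjn hc.2)]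
      ring
    · refine Finset.sum_eq_zero fun m _ => ?_
      rw [v'_high_apply_zero D y hrp k hk _ (fun hc => hkn hc.2)]
      ring

lemma v'_dot_low (D : SVDData p n Y) (y : Fin p → ℝ) {r : ℕ} (hrp : r ≤ p) (hrn : r ≤ n)
    (j k : Fin p) (hj : (j : ℕ) < r) (hjk : j ≠ k) :
    dot (v'C D y hrp j) (v'C D y hrp k) = 0 := by
  by_cases hs : Real.sqrt (muC D y hrp ⟨(j : ℕ), hj⟩) = 0
  · simp only [v'C, dif_pos hj, if_pos hs]
    exact dot_zero_left _
  · set w := v'C D y hrp k with hw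
    simp only [v'C, dif_pos hj, if_neg hs]
    rw [dot_mul_left]
    have h1 : dot ((Bmat D y r)ᵀ.mulVec (u'C D y hrp j)) w
        = dot (u'C D y hrp j) ((Bmat D y r).mulVec w) := (dot_mulVec _ _ _).symm
    rw [h1, hw, B_v' D y hrp hrn k, dot_mul_right, u'C_on, if_neg hjk]
    ring

lemma v'_gram_offdiag (D : SVDData p n Y) (y : Fin p → ℝ) {r : ℕ} (hrp : r ≤ p) (hrn : r ≤ n)
    (j k : Fin p) (hjk : j ≠ k) :
    dot (v'C D y hrp j) (v'C D y hrp k) = 0 := by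
  by_cases hj : (j : ℕ) < r
  · exact v'_dot_low D y hrp hrn j k hj hjk
  · by_cases hk : (k : ℕ) < r
    · rw [dot_comm]
      exact v'_dot_low D y hrp hrn k j hk (Ne.symm hjk)
    · rw [v'_dot_high D y hrp j k hj hk]
      by_cases hcase : (j : ℕ) < n ∧ (k : ℕ) < n
      · rw [dif_pos hcase, if_neg (fun hc => hjk (Fin.ext (by simpa using congrArg Fin.val hc)))]
      · rw [dif_neg hcase]

lemma v'_gram_diag (D : SVDData p n Y) (y : Fin p → ℝ) {r : ℕ} (hrp : r ≤ p) (hrn : r ≤ n)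
    (j : Fin p) :
    dot (v'C D y hrp j) (v'C D y hrp j) ≤ 1 := by
  by_cases hj : (j : ℕ) < r
  · by_cases hs : Real.sqrt (muC D y hrp ⟨(j : ℕ), hj⟩) = 0
    · simp only [v'C, dif_pos hj, if_pos hs]
      rw [dot_zero_left]
      norm_num
    · simp only [v'C, dif_pos hj, if_neg hs]
      rw [dot_mul_left, dot_mul_right, Bt_u'_norm D y hrp hrn j hj]
      set t := Real.sqrt (muC D y hrp ⟨(j : ℕ), hj⟩) with ht
      have hmu : muC D y hrp ⟨(j : ℕ), hj⟩ = t * t :=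
        (Real.mul_self_sqrt (muC_nonneg D y hrp _)).symm
      rw [hmu]
      have h1 : t⁻¹ * (t⁻¹ * (t * t)) = 1 := by field_simp
      rw [h1]
  · rw [v'_dot_high D y hrp j j hj hj]
    by_cases hcase : (j : ℕ) < n ∧ (j : ℕ) < n
    · rw [dif_pos hcase, if_pos rfl]
    · rw [dif_neg hcase]
      norm_num

lemma u'C_proj (D : SVDData p n Y) (y : Fin p → ℝ) {r : ℕ} (hrp : r ≤ p) (i x : Fin p) :
    (∑ j : Fin p, if (j : ℕ) < r then u'C D y hrp j i * u'C D y hrp j x else 0)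
      = projr D.U r i x := by
  rw [sum_ite_lt hrp]
  have hcast : ∀ k : Fin r, ((Fin.castLE hrp k : Fin p) : ℕ) < r := fun k => by simpa using k.2
  have hu : ∀ (k : Fin r) (i : Fin p), u'C D y hrp (Fin.castLE hrp k) i
      = ∑ a : Fin r, qC D y hrp k a * uuC D (Fin.castLE hrp a) i := by
    intro k i
    have h1 : u'C D y hrp (Fin.castLE hrp k)
        = fun i => ∑ a : Fin r, qC D y hrp ⟨((Fin.castLE hrp k : Fin p) : ℕ), hcast k⟩ a
            * uuC D (Fin.castLE hrp a) i := dif_pos (hcast k)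
    rw [h1]
    have hmk : (⟨((Fin.castLE hrp k : Fin p) : ℕ), hcast k⟩ : Fin r) = k := Fin.ext (by simp)
    rw [hmk]
  rw [Finset.sum_congr rfl fun k (_ : k ∈ Finset.univ) => by rw [hu k i, hu k x]]
  calc (∑ k : Fin r, (∑ a : Fin r, qC D y hrp k a * uuC D (Fin.castLE hrp a) i)
        * (∑ b : Fin r, qC D y hrp k b * uuC D (Fin.castLE hrp b) x))
      = ∑ k : Fin r, ∑ a : Fin r, ∑ b : Fin r,
          (qC D y hrp k a * uuC D (Fin.castLE hrp a) i)
            * (qC D y hrp k b * uuC D (Fin.castLE hrp b) x) := by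
        exact Finset.sum_congr rfl fun k _ => Finset.sum_mul_sum _ _ _ _
    _ = ∑ a : Fin r, ∑ k : Fin r, ∑ b : Fin r,
          (qC D y hrp k a * uuC D (Fin.castLE hrp a) i)
            * (qC D y hrp k b * uuC D (Fin.castLE hrp b) x) := Finset.sum_comm
    _ = ∑ a : Fin r, ∑ b : Fin r, ∑ k : Fin r,
          (qC D y hrp k a * uuC D (Fin.castLE hrp a) i)
            * (qC D y hrp k b * uuC D (Fin.castLE hrp b) x) :=
        Finset.sum_congr rfl fun a _ => Finset.sum_comm
    _ = ∑ a : Fin r, ∑ b : Fin r, uuC D (Fin.castLE hrp a) i * uuC D (Fin.castLE hrp b) x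
          * ∑ k : Fin r, qC D y hrp k a * qC D y hrp k b := by
        refine Finset.sum_congr rfl fun a _ => Finset.sum_congr rfl fun b _ => ?_
        rw [Finset.mul_sum]
        exact Finset.sum_congr rfl fun k _ => by ring
    _ = ∑ a : Fin r, ∑ b : Fin r, uuC D (Fin.castLE hrp a) i * uuC D (Fin.castLE hrp b) x
          * (if a = b then 1 else 0) := by
        refine Finset.sum_congr rfl fun a _ => Finset.sum_congr rfl fun b _ => ?_
        rw [rows_orthonormal (qC D y hrp) (qC_on D y hrp) a b]
    _ = ∑ a : Fin r, uuC D (Fin.castLE hrp a) i * uuC D (Fin.castLE hrp a) x := by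
        refine Finset.sum_congr rfl fun a _ => ?_
        rw [Finset.sum_eq_single a]
        · rw [if_pos rfl, mul_one]
        · intro b _ hb; rw [if_neg (Ne.symm hb), mul_zero]
        · intro hb; exact absurd (Finset.mem_univ _) hb
    _ = ∑ l : Fin p, (if (l : ℕ) < r then D.U i l * D.U x l else 0) := by
        rw [sum_ite_lt hrp (fun l => D.U i l * D.U x l)]
        rfl
    _ = projr D.U r i x := rfl

end Construction4

lemma dot_sum_right' {m q1 : ℕ} (z : Fin m → ℝ) (α : Fin q1 → ℝ) (f : Fin q1 → Fin m → ℝ) :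
    dot z (fun i => ∑ a, α a * f a i) = ∑ a, α a * dot z (f a) := by
  rw [dot_comm, dot_sum_left]
  exact Finset.sum_congr rfl fun a _ => by rw [dot_comm]

section Interlace

lemma interlace {p n : ℕ} {Y : Matrix (Fin p) (Fin n) ℝ} {Yhat : Matrix (Fin p) (Fin (n + 1)) ℝ}
    (D : SVDData p n Y) (Dh : SVDData p (n + 1) Yhat)
    (hY : ∀ i j, Y i j = Yhat i (Fin.castSucc j))
    (r : ℕ) (hr0 : 0 < r) (hrp : r ≤ p) :
    D.sv (r - 1) ≤ Dh.sv (r - 1) := by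
  classical
  have hm1 : r - 1 ≤ p := le_trans (Nat.sub_le r 1) hrp
  set F : Fin r → (Fin (r - 1) → ℝ) := fun b a =>
    dot (uuC Dh (Fin.castLE hm1 a)) (uuC D (Fin.castLE hrp b)) with hF
  have hnli : ¬ LinearIndependent ℝ F := by
    intro hli
    have h1 := hli.fintype_card_le_finrank
    rw [Module.finrank_fin_fun] at h1
    simp only [Fintype.card_fin] at h1
    omega
  rw [Fintype.not_linearIndependent_iff] at hnli
  obtain ⟨g, hgsum, b0, hb0⟩ := hnli
  set x : Fin p → ℝ := fun i => ∑ b : Fin r, g b * uuC D (Fin.castLE hrp b) i with hx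
  have hxx : dot x x = ∑ b : Fin r, g b ^ 2 := by
    rw [hx, dot_sum_sum]
    refine Finset.sum_congr rfl fun a _ => ?_
    rw [Finset.sum_eq_single a]
    · rw [uuC_on, if_pos rfl]; ring
    · intro b _ hb
      rw [uuC_on, if_neg (fun hc => hb (Fin.ext (by simpa using congrArg Fin.val hc)).symm)]
      ring
    · intro hb; exact absurd (Finset.mem_univ _) hb
  have hxxpos : 0 < dot x x := by
    rw [hxx]
    have hb2 : 0 < g b0 ^ 2 := by
      rcases lt_or_gt_of_ne hb0 with h | h <;> nlinarith
    calc (0:ℝ) < g b0 ^ 2 := hb2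
      _ ≤ ∑ b : Fin r, g b ^ 2 :=
        Finset.single_le_sum (fun b _ => sq_nonneg (g b)) (Finset.mem_univ b0)
  have key1 : ∀ l : Fin p, (l : ℕ) < r - 1 → dot (uuC Dh l) x = 0 := by
    intro l hl
    rw [hx, dot_sum_right']
    have heval := congrFun hgsum (⟨(l : ℕ), hl⟩ : Fin (r - 1))
    simp only [Finset.sum_apply, Pi.smul_apply, smul_eq_mul, Pi.zero_apply] at heval
    have hcl : Fin.castLE hm1 (⟨(l : ℕ), hl⟩ : Fin (r - 1)) = l := Fin.ext (by simp)
    rw [hF] at heval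
    simp only at heval
    rw [hcl] at heval
    exact heval
  have key2 : ∀ l : Fin p, r ≤ (l : ℕ) → dot (uuC D l) x = 0 := by
    intro l hl
    rw [hx, dot_sum_right']
    refine Finset.sum_eq_zero fun b _ => ?_
    rw [uuC_on, if_neg (fun hc => by
      have := congrArg Fin.val hc
      simp only [Fin.coe_castLE] at this
      omega)]
    ring
  -- lower bound
  have hlow : (D.sv (r - 1)) ^ 2 * dot x x ≤ dot (Yᵀ.mulVec x) (Yᵀ.mulVec x) := by
    rw [svd_norm_expansion D x]
    have hpars : dot x x = ∑ l : Fin p, (dot (fun i => D.U i l) x) ^ 2 :=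
      (parseval (fun l => fun i => D.U i l) (fun a b => cols_orthonormal D.hU a b) x).symm
    rw [hpars, Finset.mul_sum]
    refine Finset.sum_le_sum fun l _ => ?_
    by_cases hl : (l : ℕ) < r
    · have hsv : D.sv (r - 1) ≤ D.sv (l : ℕ) := D.sv_anti _ _ (by omega)
      have h0 : 0 ≤ D.sv (r - 1) := D.sv_nonneg _
      have hsq2 : (D.sv (r - 1)) ^ 2 ≤ (D.sv (l : ℕ)) ^ 2 := by nlinarith
      exact mul_le_mul_of_nonneg_right hsq2 (sq_nonneg _)
    · have hz : dot (fun i => D.U i l) x = 0 := key2 l (by omega)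
      rw [hz]
      simp
  have hmid : dot (Yᵀ.mulVec x) (Yᵀ.mulVec x)
      ≤ dot (Yhatᵀ.mulVec x) (Yhatᵀ.mulVec x) := by
    have hsplit : dot (Yhatᵀ.mulVec x) (Yhatᵀ.mulVec x)
        = dot (Yᵀ.mulVec x) (Yᵀ.mulVec x) + (∑ i, Yhat i (Fin.last n) * x i) ^ 2 := by
      show (∑ k : Fin (n + 1), Yhatᵀ.mulVec x k * Yhatᵀ.mulVec x k) = _
      rw [Fin.sum_univ_castSucc]
      congr 1
      · refine Finset.sum_congr rfl fun j _ => ?_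
        have h1 : Yhatᵀ.mulVec x (Fin.castSucc j) = Yᵀ.mulVec x j := by
          show (∑ i, Yhatᵀ (Fin.castSucc j) i * x i) = ∑ i, Yᵀ j i * x i
          refine Finset.sum_congr rfl fun i _ => ?_
          show Yhat i (Fin.castSucc j) * x i = Y i j * x i
          rw [hY i j]
        rw [h1]
      · have h2 : Yhatᵀ.mulVec x (Fin.last n) = ∑ i, Yhat i (Fin.last n) * x i := rfl
        rw [h2, sq]
    rw [hsplit]
    nlinarith [sq_nonneg (∑ i, Yhat i (Fin.last n) * x i)]
  have hup : dot (Yhatᵀ.mulVec x) (Yhatᵀ.mulVec x) ≤ (Dh.sv (r - 1)) ^ 2 * dot x x := by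
    rw [svd_norm_expansion Dh x]
    have hpars : dot x x = ∑ l : Fin p, (dot (fun i => Dh.U i l) x) ^ 2 :=
      (parseval (fun l => fun i => Dh.U i l) (fun a b => cols_orthonormal Dh.hU a b) x).symm
    rw [hpars, Finset.mul_sum]
    refine Finset.sum_le_sum fun l _ => ?_
    by_cases hl : (l : ℕ) < r - 1
    · have hz : dot (fun i => Dh.U i l) x = 0 := key1 l hl
      rw [hz]
      simp
    · have hsv : Dh.sv (l : ℕ) ≤ Dh.sv (r - 1) := Dh.sv_anti _ _ (by omega)
      have h0 : 0 ≤ Dh.sv (l : ℕ) := Dh.sv_nonneg _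
      have hsq2 : (Dh.sv (l : ℕ)) ^ 2 ≤ (Dh.sv (r - 1)) ^ 2 := by nlinarith
      exact mul_le_mul_of_nonneg_right hsq2 (sq_nonneg _)
  have hsq : (D.sv (r - 1)) ^ 2 ≤ (Dh.sv (r - 1)) ^ 2 := by
    have h := le_trans hlow (le_trans hmid hup)
    exact le_of_mul_le_mul_right h hxxpos
  have h1 := Real.sqrt_le_sqrt hsq
  rwa [Real.sqrt_sq (D.sv_nonneg _), Real.sqrt_sq (Dh.sv_nonneg _)] at h1

end Interlace

lemma dot_sub_mulVecT {pp m : ℕ} (M N : Matrix (Fin pp) (Fin m) ℝ) (x : Fin pp → ℝ)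
    (v : Fin m → ℝ) :
    dot v ((M - N)ᵀ.mulVec x) = dot v (Mᵀ.mulVec x) - dot v (Nᵀ.mulVec x) := by
  have h1 : ∀ k, (M - N)ᵀ.mulVec x k = Mᵀ.mulVec x k - Nᵀ.mulVec x k := by
    intro k
    show (∑ i, (M - N)ᵀ k i * x i) = (∑ i, Mᵀ k i * x i) - ∑ i, Nᵀ k i * x i
    rw [← Finset.sum_sub_distrib]
    refine Finset.sum_congr rfl fun i _ => ?_
    show (M i k - N i k) * x i = M i k * x i - N i k * x i
    ring
  show (∑ k, v k * (M - N)ᵀ.mulVec x k) = (∑ k, v k * Mᵀ.mulVec x k) - ∑ k, v k * Nᵀ.mulVec x k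
  rw [← Finset.sum_sub_distrib]
  refine Finset.sum_congr rfl fun k _ => ?_
  rw [h1 k]
  ring

/-- `Σ_j ‖Eᵀ f_j‖² = ‖E‖_F²` for an orthonormal basis `f` of `ℝ^p`. -/
lemma sum_norm_Et {pp m : ℕ} (E : Matrix (Fin pp) (Fin m) ℝ) (f : Fin pp → Fin pp → ℝ)
    (hf : ∀ j k, dot (f j) (f k) = if j = k then 1 else 0) :
    (∑ j, dot (Eᵀ.mulVec (f j)) (Eᵀ.mulVec (f j))) = ∑ i, ∑ k, (E i k) ^ 2 := by
  have e1 : ∀ j, dot (Eᵀ.mulVec (f j)) (Eᵀ.mulVec (f j))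
      = ∑ k : Fin m, (dot (f j) (fun i => E i k)) ^ 2 := by
    intro j
    show (∑ k, Eᵀ.mulVec (f j) k * Eᵀ.mulVec (f j) k) = _
    refine Finset.sum_congr rfl fun k _ => ?_
    have h2 : Eᵀ.mulVec (f j) k = dot (f j) (fun i => E i k) := by
      show (∑ i, Eᵀ k i * f j i) = ∑ i, f j i * E i k
      exact Finset.sum_congr rfl fun i _ => mul_comm _ _
    rw [h2, sq]
  have e4 : (∑ k : Fin m, dot (fun i => E i k) (fun i => E i k))
      = ∑ k : Fin m, ∑ i, (E i k) ^ 2 := by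
    refine Finset.sum_congr rfl fun k _ => ?_
    show (∑ i, E i k * E i k) = ∑ i, (E i k) ^ 2
    exact Finset.sum_congr rfl fun i _ => (sq (E i k)).symm
  rw [Finset.sum_congr rfl fun j (_ : j ∈ Finset.univ) => e1 j, Finset.sum_comm,
      Finset.sum_congr rfl fun k (_ : k ∈ Finset.univ) => parseval f hf (fun i => E i k),
      e4, Finset.sum_comm]

lemma proj_cross {pp : ℕ} (f h : Fin pp → Fin pp → ℝ) (cf ch : Fin pp → ℝ) :
    (∑ x, ∑ z, (∑ i, cf i * (f i x * f i z)) * (∑ j, ch j * (h j x * h j z)))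
      = ∑ i, ∑ j, cf i * ch j * (dot (f i) (h j)) ^ 2 := by
  have e1 : ∀ x z, (∑ i, cf i * (f i x * f i z)) * (∑ j, ch j * (h j x * h j z))
      = ∑ i, ∑ j, cf i * ch j * (f i x * h j x) * (f i z * h j z) := by
    intro x z
    rw [Finset.sum_mul_sum]
    exact Finset.sum_congr rfl fun i _ => Finset.sum_congr rfl fun j _ => by ring
  rw [Finset.sum_congr rfl fun x (_ : x ∈ Finset.univ) =>
    Finset.sum_congr rfl fun z (_ : z ∈ Finset.univ) => e1 x z]
  rw [Finset.sum_congr rfl fun x (_ : x ∈ Finset.univ) => Finset.sum_comm]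
  rw [Finset.sum_comm]
  refine Finset.sum_congr rfl fun i _ => ?_
  rw [Finset.sum_congr rfl fun x (_ : x ∈ Finset.univ) => Finset.sum_comm]
  rw [Finset.sum_comm]
  refine Finset.sum_congr rfl fun j _ => ?_
  have e2 : ∀ x, (∑ z, cf i * ch j * (f i x * h j x) * (f i z * h j z))
      = cf i * ch j * (f i x * h j x) * ∑ z, f i z * h j z := by
    intro x
    rw [Finset.mul_sum]
  rw [Finset.sum_congr rfl fun x (_ : x ∈ Finset.univ) => e2 x]
  have e3 : (∑ x, cf i * ch j * (f i x * h j x) * (∑ z, f i z * h j z))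
      = cf i * ch j * (∑ x, f i x * h j x) * (∑ z, f i z * h j z) := by
    calc (∑ x, cf i * ch j * (f i x * h j x) * (∑ z, f i z * h j z))
        = (∑ x, cf i * ch j * (f i x * h j x)) * (∑ z, f i z * h j z) := by
          rw [Finset.sum_mul]
      _ = cf i * ch j * (∑ x, f i x * h j x) * (∑ z, f i z * h j z) := by
          rw [← Finset.mul_sum]
  rw [e3]
  have hdot : dot (f i) (h j) = ∑ x, f i x * h j x := rfl
  rw [hdot, pow_two]
  ring

end LOW

open LOW

set_option maxHeartbeats 2000000

/-- **Wedin's bound for the leave-one-out setting.**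
If `σ_r − σ_{r+1} > 2‖(I − U_r U_rᵀ) y‖`, then for any choice of leading-`r`
orthonormal left singular vectors `Û_r` of `Ŷ`,
`‖Û_r Û_rᵀ − U_r U_rᵀ‖_F ≤ 2‖(I − U_r U_rᵀ) y‖/(σ_r − σ_{r+1})`. -/
theorem leave_one_out_wedin
    (p n : ℕ) (Yhat : Matrix (Fin p) (Fin (n + 1)) ℝ)
    (Y : Matrix (Fin p) (Fin n) ℝ) (y : Fin p → ℝ)
    (hY : ∀ i j, Y i j = Yhat i (Fin.castSucc j))
    (hy : ∀ i, y i = Yhat i (Fin.last n))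
    (r : ℕ) (hr0 : 0 < r) (hr : r ≤ min p n)
    (D : SVDData p n Y) (Dh : SVDData p (n + 1) Yhat)
    (hgap : 2 * vnorm (y - (projr D.U r).mulVec y) < D.sv (r - 1) - D.sv r) :
    fnorm (projr Dh.U r - projr D.U r) ≤
      2 * vnorm (y - (projr D.U r).mulVec y) / (D.sv (r - 1) - D.sv r) := by
  classical
  have hrp : r ≤ p := le_trans hr (min_le_left p n)
  have hrn : r ≤ n := le_trans hr (min_le_right p n)
  set w : Fin p → ℝ := y - (projr D.U r).mulVec y with hwdef
  set gp : ℝ := D.sv (r - 1) - D.sv r with hgdef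
  have hε0 : 0 ≤ vnorm w := Real.sqrt_nonneg _
  have hg0 : 0 < gp := by linarith
  have hvw : vnorm w ^ 2 = LOW.dot w w := by
    rw [vnorm, Real.sq_sqrt (Finset.sum_nonneg fun i _ => sq_nonneg _)]
    exact Finset.sum_congr rfl fun i _ => pow_two (w i)
  -- the perturbation matrix E = Yhat - B
  set E : Matrix (Fin p) (Fin (n + 1)) ℝ := Yhat - Bmat D y r with hEdef
  have hEapp : ∀ (i : Fin p) (k : Fin (n + 1)), E i k = if (k : ℕ) < n then 0 else w i := by
    intro i k
    show Yhat i k - Bmat D y r i k = _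
    by_cases hk : (k : ℕ) < n
    · rw [if_pos hk]
      have hB : Bmat D y r i k = Y i ⟨(k : ℕ), hk⟩ := dif_pos hk
      rw [hB, hY i ⟨(k : ℕ), hk⟩]
      have hcs : Fin.castSucc (⟨(k : ℕ), hk⟩ : Fin n) = k := Fin.ext (by simp)
      rw [hcs]
      ring
    · rw [if_neg hk]
      have hB : Bmat D y r i k = Pyv D y r i := dif_neg hk
      have hkl : k = Fin.last n := Fin.ext (by
        have h2 := k.2
        simp only [Fin.val_last]
        omega)
      rw [hB, hkl, ← hy i]
      rfl
  have hEF : (∑ i, ∑ k, (E i k) ^ 2) = LOW.dot w w := by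
    have h1 : ∀ i, (∑ k : Fin (n + 1), (E i k) ^ 2) = w i * w i := by
      intro i
      rw [Fin.sum_univ_castSucc]
      have h2 : ∀ j : Fin n, (E i (Fin.castSucc j)) ^ 2 = 0 := by
        intro j
        rw [hEapp i _, if_pos (by simpa using j.2)]
        norm_num
      rw [Finset.sum_congr rfl fun j (_ : j ∈ Finset.univ) => h2 j, Finset.sum_const_zero,
        zero_add, hEapp i _, if_neg (by simp), pow_two]
    rw [Finset.sum_congr rfl fun i (_ : i ∈ Finset.univ) => h1 i]
    rfl
  -- the first p columns of Dh.V (extended by zero)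
  set vh : Fin p → Fin (n + 1) → ℝ :=
    fun i => if h : (i : ℕ) < n + 1 then (fun k => Dh.V k ⟨(i : ℕ), h⟩) else (fun _ => 0)
    with hvhdef
  have hvh_orth : ∀ i i' : Fin p, i ≠ i' → LOW.dot (vh i) (vh i') = 0 := by
    intro i i' hne
    by_cases h1 : (i : ℕ) < n + 1
    · by_cases h2 : (i' : ℕ) < n + 1
      · rw [show vh i = fun k => Dh.V k ⟨(i : ℕ), h1⟩ from dif_pos h1,
            show vh i' = fun k => Dh.V k ⟨(i' : ℕ), h2⟩ from dif_pos h2,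
            cols_orthonormal Dh.hV,
            if_neg (fun hc => hne (Fin.ext (by simpa using congrArg Fin.val hc)))]
      · rw [show vh i' = fun _ => 0 from dif_neg h2, dot_zero_right]
    · rw [show vh i = fun _ => 0 from dif_neg h1, dot_zero_left]
  have hvh_diag : ∀ i : Fin p, LOW.dot (vh i) (vh i) ≤ 1 := by
    intro i
    by_cases h1 : (i : ℕ) < n + 1
    · rw [show vh i = fun k => Dh.V k ⟨(i : ℕ), h1⟩ from dif_pos h1,
        cols_orthonormal Dh.hV, if_pos rfl]
    · rw [show vh i = fun _ => 0 from dif_neg h1, dot_zero_left]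
      norm_num
  -- overlap coefficients
  obtain ⟨a, ha⟩ : ∃ f : Fin p → Fin p → ℝ,
      f = fun i j => LOW.dot (uuC Dh i) (u'C D y hrp j) := ⟨_, rfl⟩
  obtain ⟨bb, hbbdef⟩ : ∃ f : Fin p → Fin p → ℝ,
      f = fun i j => LOW.dot (vh i) (v'C D y hrp j) := ⟨_, rfl⟩
  obtain ⟨e1, he1def⟩ : ∃ f : Fin p → Fin p → ℝ,
      f = fun i j => LOW.dot (vh i) (Eᵀ.mulVec (u'C D y hrp j)) := ⟨_, rfl⟩
  obtain ⟨e2, he2def⟩ : ∃ f : Fin p → Fin p → ℝ,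
      f = fun i j => LOW.dot (v'C D y hrp j) (Eᵀ.mulVec (uuC Dh i)) := ⟨_, rfl⟩
  have haij : ∀ i j, a i j = LOW.dot (uuC Dh i) (u'C D y hrp j) := fun i j => by rw [ha]
  have hbij : ∀ i j, bb i j = LOW.dot (vh i) (v'C D y hrp j) := fun i j => by rw [hbbdef]
  have he1ij : ∀ i j, e1 i j = LOW.dot (vh i) (Eᵀ.mulVec (u'C D y hrp j)) :=
    fun i j => by rw [he1def]
  have he2ij : ∀ i j, e2 i j = LOW.dot (v'C D y hrp j) (Eᵀ.mulVec (uuC Dh i)) :=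
    fun i j => by rw [he2def]
  -- the two Wedin equations
  have Eq1 : ∀ i j : Fin p, (i : ℕ) < r →
      e1 i j = Dh.sv (i : ℕ) * a i j - sC D y hrp j * bb i j := by
    intro i j hi
    have hin1 : (i : ℕ) < n + 1 := by omega
    have hip : ((⟨(i : ℕ), hin1⟩ : Fin (n + 1)) : ℕ) < p := lt_of_lt_of_le hi hrp
    rw [he1ij, hEdef, dot_sub_mulVecT]
    have hterm1 : LOW.dot (vh i) (Yhatᵀ.mulVec (u'C D y hrp j)) = Dh.sv (i : ℕ) * a i j := by
      have h0 : LOW.dot (vh i) (Yhatᵀ.mulVec (u'C D y hrp j))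
          = LOW.dot (Yhat.mulVec (vh i)) (u'C D y hrp j) := by
        rw [dot_mulVec, Matrix.transpose_transpose]
      rw [h0, show vh i = fun k => Dh.V k ⟨(i : ℕ), hin1⟩ from dif_pos hin1,
        svd_mulVec_col Dh (⟨(i : ℕ), hin1⟩ : Fin (n + 1)) hip]
      have h2 := dot_mul_left (Dh.sv ((⟨(i : ℕ), hin1⟩ : Fin (n + 1)) : ℕ))
        (fun x => Dh.U x ⟨((⟨(i : ℕ), hin1⟩ : Fin (n + 1)) : ℕ), hip⟩) (u'C D y hrp j)
      rw [haij]
      exact h2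
    have hterm2 : LOW.dot (vh i) ((Bmat D y r)ᵀ.mulVec (u'C D y hrp j))
        = sC D y hrp j * bb i j := by
      rw [Bt_u' D y hrp hrn j, dot_mul_right, hbij]
    rw [hterm1, hterm2]
  have Eq2 : ∀ i j : Fin p, (i : ℕ) < r →
      e2 i j = Dh.sv (i : ℕ) * bb i j - sC D y hrp j * a i j := by
    intro i j hi
    have hin1 : (i : ℕ) < n + 1 := by omega
    rw [he2ij, hEdef, dot_sub_mulVecT]
    have hterm1 : LOW.dot (v'C D y hrp j) (Yhatᵀ.mulVec (uuC Dh i))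
        = Dh.sv (i : ℕ) * bb i j := by
      have hsvd' : Yhatᵀ.mulVec (uuC Dh i) = fun jj : Fin (n + 1) =>
          if h : (i : ℕ) < n + 1 then Dh.sv (i : ℕ) * Dh.V jj ⟨(i : ℕ), h⟩ else 0 :=
        svd_tmulVec_col Dh i
      have hfun : (fun jj : Fin (n + 1) =>
          if h : (i : ℕ) < n + 1 then Dh.sv (i : ℕ) * Dh.V jj ⟨(i : ℕ), h⟩ else 0)
          = fun jj => Dh.sv (i : ℕ) * vh i jj := by
        funext jj
        rw [dif_pos hin1, show vh i = fun k => Dh.V k ⟨(i : ℕ), hin1⟩ from dif_pos hin1]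
      rw [hsvd', hfun, dot_mul_right, hbij, LOW.dot_comm (vh i) (v'C D y hrp j)]
    have hterm2 : LOW.dot (v'C D y hrp j) ((Bmat D y r)ᵀ.mulVec (uuC Dh i))
        = sC D y hrp j * a i j := by
      have h0 : LOW.dot (v'C D y hrp j) ((Bmat D y r)ᵀ.mulVec (uuC Dh i))
          = LOW.dot ((Bmat D y r).mulVec (v'C D y hrp j)) (uuC Dh i) := by
        rw [dot_mulVec, Matrix.transpose_transpose]
      rw [h0, B_v' D y hrp hrn j, dot_mul_left, haij,
        LOW.dot_comm (uuC Dh i) (u'C D y hrp j)]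
    rw [hterm1, hterm2]
  -- pointwise Wedin inequality
  have hpoint : ∀ i j : Fin p, (i : ℕ) < r → r ≤ (j : ℕ) →
      gp ^ 2 * (a i j ^ 2 + bb i j ^ 2) ≤ e1 i j ^ 2 + e2 i j ^ 2 := by
    intro i j hi hj
    have hintl := interlace D Dh hY r hr0 hrp
    have hA1 : D.sv (r - 1) ≤ Dh.sv (i : ℕ) :=
      le_trans hintl (Dh.sv_anti _ _ (by omega))
    have hA0 : 0 ≤ Dh.sv (i : ℕ) := Dh.sv_nonneg _
    have hS : sC D y hrp j ≤ D.sv r := sC_le D y hrp j hj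
    have hS0 : 0 ≤ sC D y hrp j := sC_nonneg D y hrp j
    rw [Eq1 i j hi, Eq2 i j hi]
    have h1 : gp ≤ Dh.sv (i : ℕ) - sC D y hrp j := by rw [hgdef]; linarith
    have h2 : gp ^ 2 * (a i j ^ 2 + bb i j ^ 2)
        ≤ (Dh.sv (i : ℕ) - sC D y hrp j) ^ 2 * (a i j ^ 2 + bb i j ^ 2) := by
      have h3 : gp ^ 2 ≤ (Dh.sv (i : ℕ) - sC D y hrp j) ^ 2 := by nlinarith
      exact mul_le_mul_of_nonneg_right h3 (by positivity)
    have h4 : (Dh.sv (i : ℕ) * a i j - sC D y hrp j * bb i j) ^ 2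
        + (Dh.sv (i : ℕ) * bb i j - sC D y hrp j * a i j) ^ 2
        = (Dh.sv (i : ℕ) - sC D y hrp j) ^ 2 * (a i j ^ 2 + bb i j ^ 2)
          + 2 * (Dh.sv (i : ℕ) * sC D y hrp j) * (a i j - bb i j) ^ 2 := by ring
    have h5 : 0 ≤ 2 * (Dh.sv (i : ℕ) * sC D y hrp j) * (a i j - bb i j) ^ 2 :=
      mul_nonneg (by nlinarith [mul_nonneg hA0 hS0]) (sq_nonneg _)
    linarith
  -- summed bounds on the error terms
  have hsum_e1 : (∑ i, ∑ j, e1 i j ^ 2) ≤ LOW.dot w w := by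
    rw [Finset.sum_comm]
    have h1 : ∀ j, (∑ i, e1 i j ^ 2)
        ≤ LOW.dot (Eᵀ.mulVec (u'C D y hrp j)) (Eᵀ.mulVec (u'C D y hrp j)) := by
      intro j
      have hb := bessel vh hvh_orth hvh_diag (Eᵀ.mulVec (u'C D y hrp j))
      calc (∑ i, e1 i j ^ 2)
          = ∑ i, (LOW.dot (vh i) (Eᵀ.mulVec (u'C D y hrp j))) ^ 2 :=
            Finset.sum_congr rfl fun i _ => by rw [he1ij]
        _ ≤ _ := hb
    calc (∑ j, ∑ i, e1 i j ^ 2)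
        ≤ ∑ j, LOW.dot (Eᵀ.mulVec (u'C D y hrp j)) (Eᵀ.mulVec (u'C D y hrp j)) :=
          Finset.sum_le_sum fun j _ => h1 j
      _ = ∑ i, ∑ k, (E i k) ^ 2 := sum_norm_Et E (u'C D y hrp) (u'C_on D y hrp)
      _ = LOW.dot w w := hEF
  have hsum_e2 : (∑ i, ∑ j, e2 i j ^ 2) ≤ LOW.dot w w := by
    have h1 : ∀ i, (∑ j, e2 i j ^ 2)
        ≤ LOW.dot (Eᵀ.mulVec (uuC Dh i)) (Eᵀ.mulVec (uuC Dh i)) := by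
      intro i
      have hb := bessel (v'C D y hrp) (v'_gram_offdiag D y hrp hrn) (v'_gram_diag D y hrp hrn)
        (Eᵀ.mulVec (uuC Dh i))
      calc (∑ j, e2 i j ^ 2)
          = ∑ j, (LOW.dot (v'C D y hrp j) (Eᵀ.mulVec (uuC Dh i))) ^ 2 :=
            Finset.sum_congr rfl fun j _ => by rw [he2ij]
        _ ≤ _ := hb
    calc (∑ i, ∑ j, e2 i j ^ 2)
        ≤ ∑ i, LOW.dot (Eᵀ.mulVec (uuC Dh i)) (Eᵀ.mulVec (uuC Dh i)) :=
          Finset.sum_le_sum fun i _ => h1 i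
      _ = ∑ i, ∑ k, (E i k) ^ 2 := sum_norm_Et E (uuC Dh) (uuC_on Dh)
      _ = LOW.dot w w := hEF
  -- main summed inequality
  have hmain : gp ^ 2 * (∑ i : Fin p, ∑ j : Fin p,
      if (i : ℕ) < r ∧ r ≤ (j : ℕ) then a i j ^ 2 + bb i j ^ 2 else 0)
      ≤ 2 * LOW.dot w w := by
    have h1 : gp ^ 2 * (∑ i : Fin p, ∑ j : Fin p,
        if (i : ℕ) < r ∧ r ≤ (j : ℕ) then a i j ^ 2 + bb i j ^ 2 else 0)
        = ∑ i : Fin p, ∑ j : Fin p,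
          (if (i : ℕ) < r ∧ r ≤ (j : ℕ) then gp ^ 2 * (a i j ^ 2 + bb i j ^ 2) else 0) := by
      rw [Finset.mul_sum]
      refine Finset.sum_congr rfl fun i _ => ?_
      rw [Finset.mul_sum]
      refine Finset.sum_congr rfl fun j _ => ?_
      by_cases hij : (i : ℕ) < r ∧ r ≤ (j : ℕ)
      · rw [if_pos hij, if_pos hij]
      · rw [if_neg hij, if_neg hij, mul_zero]
    rw [h1]
    have h2 : (∑ i : Fin p, ∑ j : Fin p,
        (if (i : ℕ) < r ∧ r ≤ (j : ℕ) then gp ^ 2 * (a i j ^ 2 + bb i j ^ 2) else 0))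
        ≤ ∑ i : Fin p, ∑ j : Fin p, (e1 i j ^ 2 + e2 i j ^ 2) := by
      refine Finset.sum_le_sum fun i _ => Finset.sum_le_sum fun j _ => ?_
      by_cases hij : (i : ℕ) < r ∧ r ≤ (j : ℕ)
      · rw [if_pos hij]; exact hpoint i j hij.1 hij.2
      · rw [if_neg hij]; positivity
    have h3 : (∑ i : Fin p, ∑ j : Fin p, (e1 i j ^ 2 + e2 i j ^ 2))
        = (∑ i, ∑ j, e1 i j ^ 2) + ∑ i, ∑ j, e2 i j ^ 2 := by
      rw [← Finset.sum_add_distrib]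
      exact Finset.sum_congr rfl fun i _ => Finset.sum_add_distrib
    linarith
  -- Frobenius norm identity
  have hPh : ∀ x z : Fin p, projr Dh.U r x z
      = ∑ i : Fin p, (if (i : ℕ) < r then (1 : ℝ) else 0) * (uuC Dh i x * uuC Dh i z) := by
    intro x z
    show (∑ l : Fin p, if (l : ℕ) < r then Dh.U x l * Dh.U z l else 0) = _
    refine Finset.sum_congr rfl fun l _ => ?_
    by_cases hl : (l : ℕ) < r
    · rw [if_pos hl, if_pos hl, one_mul]; rfl
    · rw [if_neg hl, if_neg hl, zero_mul]
  have hP : ∀ x z : Fin p, projr D.U r x z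
      = ∑ j : Fin p, (if (j : ℕ) < r then (1 : ℝ) else 0)
          * (u'C D y hrp j x * u'C D y hrp j z) := by
    intro x z
    rw [← u'C_proj D y hrp x z]
    refine Finset.sum_congr rfl fun l _ => ?_
    by_cases hl : (l : ℕ) < r
    · rw [if_pos hl, if_pos hl, one_mul]
    · rw [if_neg hl, if_neg hl, zero_mul]
  have hdiagX : (∑ i : Fin p, ∑ k : Fin p, (if (i : ℕ) < r then (1 : ℝ) else 0)
      * (if (k : ℕ) < r then (1 : ℝ) else 0) * (LOW.dot (uuC Dh i) (uuC Dh k)) ^ 2)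
      = (r : ℝ) := by
    have h1 : ∀ i : Fin p, (∑ k : Fin p, (if (i : ℕ) < r then (1 : ℝ) else 0)
        * (if (k : ℕ) < r then (1 : ℝ) else 0) * (LOW.dot (uuC Dh i) (uuC Dh k)) ^ 2)
        = if (i : ℕ) < r then (1 : ℝ) else 0 := by
      intro i
      rw [Finset.sum_eq_single i]
      · rw [uuC_on Dh, if_pos rfl]
        by_cases hi : (i : ℕ) < r
        · rw [if_pos hi]; norm_num
        · rw [if_neg hi]; norm_num
      · intro k _ hk
        rw [uuC_on Dh, if_neg (Ne.symm hk)]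
        norm_num
      · intro h; exact absurd (Finset.mem_univ _) h
    rw [Finset.sum_congr rfl fun i (_ : i ∈ Finset.univ) => h1 i, sum_indicator_card hrp]
  have hdiagY : (∑ i : Fin p, ∑ k : Fin p, (if (i : ℕ) < r then (1 : ℝ) else 0)
      * (if (k : ℕ) < r then (1 : ℝ) else 0) * (LOW.dot (u'C D y hrp i) (u'C D y hrp k)) ^ 2)
      = (r : ℝ) := by
    have h1 : ∀ i : Fin p, (∑ k : Fin p, (if (i : ℕ) < r then (1 : ℝ) else 0)
        * (if (k : ℕ) < r then (1 : ℝ) else 0) * (LOW.dot (u'C D y hrp i) (u'C D y hrp k)) ^ 2)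
        = if (i : ℕ) < r then (1 : ℝ) else 0 := by
      intro i
      rw [Finset.sum_eq_single i]
      · rw [u'C_on D y hrp, if_pos rfl]
        by_cases hi : (i : ℕ) < r
        · rw [if_pos hi]; norm_num
        · rw [if_neg hi]; norm_num
      · intro k _ hk
        rw [u'C_on D y hrp, if_neg (Ne.symm hk)]
        norm_num
      · intro h; exact absurd (Finset.mem_univ _) h
    rw [Finset.sum_congr rfl fun i (_ : i ∈ Finset.univ) => h1 i, sum_indicator_card hrp]
  have hSF : (∑ x, ∑ z, ((projr Dh.U r - projr D.U r) x z) ^ 2)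
      = 2 * ((r : ℝ) - ∑ i : Fin p, ∑ j : Fin p, (if (i : ℕ) < r then (1 : ℝ) else 0)
          * (if (j : ℕ) < r then (1 : ℝ) else 0) * (a i j) ^ 2) := by
    have hentry : ∀ x z : Fin p, ((projr Dh.U r - projr D.U r) x z) ^ 2
        = (∑ i : Fin p, (if (i : ℕ) < r then (1 : ℝ) else 0) * (uuC Dh i x * uuC Dh i z))
            * (∑ k : Fin p, (if (k : ℕ) < r then (1 : ℝ) else 0) * (uuC Dh k x * uuC Dh k z))
          - 2 * ((∑ i : Fin p, (if (i : ℕ) < r then (1 : ℝ) else 0) * (uuC Dh i x * uuC Dh i z))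
            * (∑ j : Fin p, (if (j : ℕ) < r then (1 : ℝ) else 0)
                * (u'C D y hrp j x * u'C D y hrp j z)))
          + (∑ i : Fin p, (if (i : ℕ) < r then (1 : ℝ) else 0)
              * (u'C D y hrp i x * u'C D y hrp i z))
            * (∑ k : Fin p, (if (k : ℕ) < r then (1 : ℝ) else 0)
              * (u'C D y hrp k x * u'C D y hrp k z)) := by
      intro x z
      have h0 : (projr Dh.U r - projr D.U r) x z = projr Dh.U r x z - projr D.U r x z := rfl
      rw [h0, hPh x z, hP x z]
      ring
    rw [Finset.sum_congr rfl fun x (_ : x ∈ Finset.univ) =>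
      Finset.sum_congr rfl fun z _ => hentry x z]
    have hdist :
        (∑ x : Fin p, ∑ z : Fin p,
          ((∑ i : Fin p, (if (i : ℕ) < r then (1 : ℝ) else 0) * (uuC Dh i x * uuC Dh i z))
            * (∑ k : Fin p, (if (k : ℕ) < r then (1 : ℝ) else 0) * (uuC Dh k x * uuC Dh k z))
          - 2 * ((∑ i : Fin p, (if (i : ℕ) < r then (1 : ℝ) else 0) * (uuC Dh i x * uuC Dh i z))
            * (∑ j : Fin p, (if (j : ℕ) < r then (1 : ℝ) else 0)
                * (u'C D y hrp j x * u'C D y hrp j z)))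
          + (∑ i : Fin p, (if (i : ℕ) < r then (1 : ℝ) else 0)
              * (u'C D y hrp i x * u'C D y hrp i z))
            * (∑ k : Fin p, (if (k : ℕ) < r then (1 : ℝ) else 0)
              * (u'C D y hrp k x * u'C D y hrp k z))))
        = (∑ x : Fin p, ∑ z : Fin p,
            (∑ i : Fin p, (if (i : ℕ) < r then (1 : ℝ) else 0) * (uuC Dh i x * uuC Dh i z))
            * (∑ k : Fin p, (if (k : ℕ) < r then (1 : ℝ) else 0) * (uuC Dh k x * uuC Dh k z)))
          - 2 * (∑ x : Fin p, ∑ z : Fin p,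
            (∑ i : Fin p, (if (i : ℕ) < r then (1 : ℝ) else 0) * (uuC Dh i x * uuC Dh i z))
            * (∑ j : Fin p, (if (j : ℕ) < r then (1 : ℝ) else 0)
                * (u'C D y hrp j x * u'C D y hrp j z)))
          + (∑ x : Fin p, ∑ z : Fin p,
            (∑ i : Fin p, (if (i : ℕ) < r then (1 : ℝ) else 0)
              * (u'C D y hrp i x * u'C D y hrp i z))
            * (∑ k : Fin p, (if (k : ℕ) < r then (1 : ℝ) else 0)
              * (u'C D y hrp k x * u'C D y hrp k z))) := by
      rw [Finset.sum_congr rfl fun x (_ : x ∈ Finset.univ) => by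
        rw [Finset.sum_add_distrib, Finset.sum_sub_distrib, ← Finset.mul_sum]]
      rw [Finset.sum_add_distrib, Finset.sum_sub_distrib, ← Finset.mul_sum]
    rw [hdist, proj_cross (uuC Dh) (uuC Dh) _ _, proj_cross (uuC Dh) (u'C D y hrp) _ _,
      proj_cross (u'C D y hrp) (u'C D y hrp) _ _, hdiagX, hdiagY]
    have hXa : (∑ i : Fin p, ∑ j : Fin p, (if (i : ℕ) < r then (1 : ℝ) else 0)
        * (if (j : ℕ) < r then (1 : ℝ) else 0) * (LOW.dot (uuC Dh i) (u'C D y hrp j)) ^ 2)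
        = ∑ i : Fin p, ∑ j : Fin p, (if (i : ℕ) < r then (1 : ℝ) else 0)
          * (if (j : ℕ) < r then (1 : ℝ) else 0) * (a i j) ^ 2 := by
      refine Finset.sum_congr rfl fun i _ => Finset.sum_congr rfl fun j _ => ?_
      rw [haij]
    rw [hXa]
    ring
  -- tie the diagonal part with Parseval
  have hWT : (∑ i : Fin p, ∑ j : Fin p, (if (i : ℕ) < r then (1 : ℝ) else 0)
      * (if (j : ℕ) < r then (1 : ℝ) else 0) * (a i j) ^ 2)
      + (∑ i : Fin p, ∑ j : Fin p, if (i : ℕ) < r ∧ r ≤ (j : ℕ) then (a i j) ^ 2 else 0)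
      = (r : ℝ) := by
    rw [← Finset.sum_add_distrib]
    have h1 : ∀ i : Fin p,
        ((∑ j : Fin p, (if (i : ℕ) < r then (1 : ℝ) else 0)
            * (if (j : ℕ) < r then (1 : ℝ) else 0) * (a i j) ^ 2)
          + ∑ j : Fin p, if (i : ℕ) < r ∧ r ≤ (j : ℕ) then (a i j) ^ 2 else 0)
        = if (i : ℕ) < r then (1 : ℝ) else 0 := by
      intro i
      by_cases hi : (i : ℕ) < r
      · have hparse : (∑ j : Fin p, (a i j) ^ 2) = 1 := by
          have hp := parseval (u'C D y hrp) (u'C_on D y hrp) (uuC Dh i)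
          rw [uuC_on Dh, if_pos rfl] at hp
          calc (∑ j : Fin p, (a i j) ^ 2)
              = ∑ j : Fin p, (LOW.dot (u'C D y hrp j) (uuC Dh i)) ^ 2 := by
                refine Finset.sum_congr rfl fun j _ => ?_
                rw [haij, LOW.dot_comm]
            _ = 1 := hp
        have hcomb : (∑ j : Fin p, ((if (i : ℕ) < r then (1 : ℝ) else 0)
            * (if (j : ℕ) < r then (1 : ℝ) else 0) * (a i j) ^ 2
            + if (i : ℕ) < r ∧ r ≤ (j : ℕ) then (a i j) ^ 2 else 0))
            = ∑ j : Fin p, (a i j) ^ 2 := by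
          refine Finset.sum_congr rfl fun j _ => ?_
          by_cases hjr : (j : ℕ) < r
          · rw [if_pos hi, if_pos hjr, if_neg (fun hc => absurd hc.2 (by omega))]; ring
          · rw [if_pos hi, if_neg hjr, if_pos ⟨hi, by omega⟩]; ring
        rw [← Finset.sum_add_distrib, hcomb, hparse, if_pos hi]
      · have hz1 : (∑ j : Fin p, (if (i : ℕ) < r then (1 : ℝ) else 0)
            * (if (j : ℕ) < r then (1 : ℝ) else 0) * (a i j) ^ 2) = 0 :=
          Finset.sum_eq_zero fun j _ => by rw [if_neg hi]; ring
        have hz2 : (∑ j : Fin p, if (i : ℕ) < r ∧ r ≤ (j : ℕ) then (a i j) ^ 2 else 0) = 0 :=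
          Finset.sum_eq_zero fun j _ => if_neg (fun hc => hi hc.1)
        rw [hz1, hz2, if_neg hi]
        ring
    rw [Finset.sum_congr rfl fun i (_ : i ∈ Finset.univ) => h1 i, sum_indicator_card hrp]
  have hSF2 : (∑ x, ∑ z, ((projr Dh.U r - projr D.U r) x z) ^ 2)
      = 2 * (∑ i : Fin p, ∑ j : Fin p, if (i : ℕ) < r ∧ r ≤ (j : ℕ) then (a i j) ^ 2 else 0) := by
    rw [hSF]
    linear_combination (-2 : ℝ) * hWT
  -- combine everything
  have hTa_le_T : (∑ i : Fin p, ∑ j : Fin p, if (i : ℕ) < r ∧ r ≤ (j : ℕ) then (a i j) ^ 2 else 0)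
      ≤ ∑ i : Fin p, ∑ j : Fin p,
          if (i : ℕ) < r ∧ r ≤ (j : ℕ) then (a i j) ^ 2 + (bb i j) ^ 2 else 0 := by
    refine Finset.sum_le_sum fun i _ => Finset.sum_le_sum fun j _ => ?_
    by_cases hij : (i : ℕ) < r ∧ r ≤ (j : ℕ)
    · rw [if_pos hij, if_pos hij]
      nlinarith [sq_nonneg (bb i j)]
    · rw [if_neg hij, if_neg hij]
  have hSF_le : (∑ x, ∑ z, ((projr Dh.U r - projr D.U r) x z) ^ 2) * gp ^ 2
      ≤ 4 * LOW.dot w w := by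
    rw [hSF2]
    have h1 : gp ^ 2 * (∑ i : Fin p, ∑ j : Fin p,
        if (i : ℕ) < r ∧ r ≤ (j : ℕ) then (a i j) ^ 2 else 0)
        ≤ gp ^ 2 * (∑ i : Fin p, ∑ j : Fin p,
          if (i : ℕ) < r ∧ r ≤ (j : ℕ) then (a i j) ^ 2 + (bb i j) ^ 2 else 0) :=
      mul_le_mul_of_nonneg_left hTa_le_T (sq_nonneg _)
    have h0 : (2 * (∑ i : Fin p, ∑ j : Fin p,
        if (i : ℕ) < r ∧ r ≤ (j : ℕ) then (a i j) ^ 2 else 0)) * gp ^ 2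
        = 2 * (gp ^ 2 * (∑ i : Fin p, ∑ j : Fin p,
          if (i : ℕ) < r ∧ r ≤ (j : ℕ) then (a i j) ^ 2 else 0)) := by ring
    rw [h0]
    linarith [h1, hmain]
  have hfinal : (∑ x, ∑ z, ((projr Dh.U r - projr D.U r) x z) ^ 2)
      ≤ (2 * vnorm w / gp) ^ 2 := by
    have hgsq : 0 < gp ^ 2 := by positivity
    have h9 : (2 * vnorm w / gp) ^ 2 = 4 * LOW.dot w w / gp ^ 2 := by
      rw [div_pow, mul_pow, hvw]
      norm_num
    rw [h9, le_div_iff₀ hgsq]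
    exact hSF_le
  calc fnorm (projr Dh.U r - projr D.U r)
      = Real.sqrt (∑ x, ∑ z, ((projr Dh.U r - projr D.U r) x z) ^ 2) := rfl
    _ ≤ Real.sqrt ((2 * vnorm w / gp) ^ 2) := Real.sqrt_le_sqrt hfinal
    _ = 2 * vnorm w / gp :=
      Real.sqrt_sq (div_nonneg (mul_nonneg (by norm_num) hε0) (le_of_lt hg0))
end
end
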